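/- arXiv:funct-an/9707009 — 3 statements merged into one kernel-verified Lean document; each statement's English description precedes it below -/
import Mathlib

section
/- Let α be a strongly continuous one-parameter isometric representation on a Banach space E and z ∈ ℂ. Then the analytic continuation α_z is a closed operator: if (a_k) is a sequence in D(α_z) with a_k → a and α_z(a_k) → b in norm, then a ∈ D(α_z) and α_z(a) = b. -/
open Complex MeasureTheory Filter Topology Set

noncomputable section

/-- The closed horizontal strip between the real axis and the line `Im = z.im`. -/
def hStrip (z : ℂ) : Set ℂ := {y : ℂ | y.im ∈ Set.uIcc 0 z.im}

/-- A strongly continuous one-parameter (contractive, hence isometric) representation. -/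
structure IsOneParamRep {E : Type*} [NormedAddCommGroup E] [NormedSpace ℂ E]
    (α : ℝ → E →L[ℂ] E) : Prop where
  map_add : ∀ s t : ℝ, α (s + t) = (α s).comp (α t)
  map_zero : α 0 = ContinuousLinearMap.id ℂ E
  norm_le : ∀ t : ℝ, ‖α t‖ ≤ 1
  strong_cont : ∀ a : E, Continuous fun t : ℝ => α t a

lemma tendsto_conj_punctured (w : ℂ) :
    Tendsto (fun z => (starRingEnd ℂ) z) (𝓝[≠] w) (𝓝[≠] ((starRingEnd ℂ) w)) := by
  rw [tendsto_nhdsWithin_iff]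
  constructor
  · exact (Complex.continuous_conj.tendsto w).mono_left nhdsWithin_le_nhds
  · filter_upwards [self_mem_nhdsWithin] with z hz
    simpa [sub_eq_zero] using fun h => hz ((starRingEnd ℂ).injective h)

lemma hasDerivAt_conj_conj {g : ℂ → ℂ} {w d : ℂ}
    (hg : HasDerivAt g d ((starRingEnd ℂ) w)) :
    HasDerivAt (fun z => (starRingEnd ℂ) (g ((starRingEnd ℂ) z))) ((starRingEnd ℂ) d) w := by
  rw [hasDerivAt_iff_tendsto_slope] at hg ⊢
  have heq : slope (fun z => (starRingEnd ℂ) (g ((starRingEnd ℂ) z))) w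
      = fun z => (starRingEnd ℂ) (slope g ((starRingEnd ℂ) w) ((starRingEnd ℂ) z)) := by
    funext z
    simp only [slope_def_field, map_div₀, map_sub, Complex.conj_conj]
  rw [heq]
  exact (Complex.continuous_conj.tendsto d).comp (hg.comp (tendsto_conj_punctured w))

section Reflection

variable {c : ℝ} {g : ℂ → ℂ}

lemma strip_eq_zero (hc : 0 < c)
    (hgc : ContinuousOn g (Complex.im ⁻¹' Icc 0 c))
    (hgd : DifferentiableOn ℂ g (Complex.im ⁻¹' Ioo 0 c))
    (hg0 : ∀ t : ℝ, g t = 0) :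
    ∀ w : ℂ, w.im ∈ Icc 0 c → g w = 0 := by
  have hSo : IsOpen (Complex.im ⁻¹' Ioo 0 c) := isOpen_Ioo.preimage Complex.continuous_im
  set D : Set ℂ := Complex.im ⁻¹' Ioo (-c) c with hD
  have hDopen : IsOpen D := isOpen_Ioo.preimage Complex.continuous_im
  set G : ℂ → ℂ := fun w => if 0 ≤ w.im then g w
    else (starRingEnd ℂ) (g ((starRingEnd ℂ) w)) with hGdef
  have hGpos : ∀ v : ℂ, 0 ≤ v.im → G v = g v := fun v hv => if_pos hv
  have hGneg : ∀ v : ℂ, v.im < 0 → G v = (starRingEnd ℂ) (g ((starRingEnd ℂ) v)) :=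
    fun v hv => if_neg (not_le.2 hv)
  have hgzero_real : ∀ v : ℂ, v.im = 0 → g v = 0 := by
    intro v hv
    have : v = (v.re : ℂ) := Complex.ext rfl (by simp [hv])
    rw [this]; exact hg0 _
  have hreal : ∀ t : ℝ, G t = 0 := fun t => by
    rw [hGpos _ (by simp), hg0]
  -- differentiability off the real axis
  have hGdiff : ∀ v ∈ D, v.im ≠ 0 → DifferentiableAt ℂ G v := by
    intro v hv hv0
    rcases hv0.lt_or_gt with hneg | hpos
    · have hcv : ((starRingEnd ℂ) v).im ∈ Ioo 0 c := by
        rw [Complex.conj_im]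
        exact ⟨neg_pos.2 hneg, by linarith [hv.1]⟩
      have h1 := (hgd.differentiableAt (hSo.mem_nhds hcv)).hasDerivAt
      have h2 := (hasDerivAt_conj_conj h1).differentiableAt
      refine h2.congr_of_eventuallyEq ?_
      filter_upwards [(isOpen_lt Complex.continuous_im continuous_const).mem_nhds
        (show v.im < (0:ℝ) from hneg)] with u hu
      exact hGneg u hu
    · have hcv : v.im ∈ Ioo 0 c := ⟨hpos, hv.2⟩
      have h2 := hgd.differentiableAt (hSo.mem_nhds hcv)
      refine h2.congr_of_eventuallyEq ?_
      filter_upwards [(isOpen_lt continuous_const Complex.continuous_im).mem_nhds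
        (show (0:ℝ) < v.im from hpos)] with u hu
      exact hGpos u hu.le
  -- continuity on D
  have hGcont : ∀ v ∈ D, ContinuousAt G v := by
    intro v hv
    rcases lt_trichotomy v.im 0 with hneg | hzero | hpos
    · exact (hGdiff v hv hneg.ne).continuousAt
    · rw [Metric.continuousAt_iff]
      intro ε hε
      have hvS : v ∈ Complex.im ⁻¹' Icc 0 c := by
        simp only [mem_preimage, hzero, mem_Icc, le_refl, true_and]; exact hc.le
      obtain ⟨δ₀, hδ₀, hδ⟩ := Metric.continuousWithinAt_iff.1 (hgc v hvS) ε hε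
      refine ⟨min δ₀ c, lt_min hδ₀ hc, fun {u} hu => ?_⟩
      have him : |u.im| < c := by
        have h1 : |u.im - v.im| ≤ dist u v := by
          rw [Complex.dist_eq]
          exact (Complex.abs_im_le_norm (u - v)).trans_eq' (by rw [Complex.sub_im])
        rw [hzero, sub_zero] at h1
        exact h1.trans_lt (hu.trans_le (min_le_right _ _))
      have hGv : G v = g v := hGpos v hzero.ge
      have hgv0 : g v = 0 := hgzero_real v hzero
      have hu₀ : dist u v < δ₀ := hu.trans_le (min_le_left _ _)
      rcases le_or_gt 0 u.im with hupos | huneg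
      · rw [hGv, hGpos u hupos]
        exact hδ ⟨hupos, ((le_abs_self _).trans_lt him).le⟩ hu₀
      · rw [hGv, hGneg u huneg]
        have hcu : (starRingEnd ℂ) u ∈ Complex.im ⁻¹' Icc 0 c := by
          rw [mem_preimage, Complex.conj_im]
          exact ⟨neg_nonneg.2 huneg.le, ((neg_le_abs _).trans_lt him).le⟩
        have hd2 : dist ((starRingEnd ℂ) u) v < δ₀ := by
          have hvconj : (starRingEnd ℂ) v = v := Complex.conj_eq_iff_im.2 hzero
          calc dist ((starRingEnd ℂ) u) v = dist ((starRingEnd ℂ) u) ((starRingEnd ℂ) v) := by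
                rw [hvconj]
          _ = dist u v := Complex.dist_conj_conj _ _
          _ < δ₀ := hu₀
        have h3 := hδ hcu hd2
        rw [hgv0] at h3 ⊢
        rw [dist_zero_right] at h3 ⊢
        rwa [RCLike.norm_conj]
    · exact (hGdiff v hv hpos.ne').continuousAt
  have hmemD : ∀ v : ℂ, |v.im| < c → v ∈ D := fun v h => by
    rw [hD, mem_preimage, mem_Ioo, ← abs_lt]; exact h
  have habs_uIcc : ∀ y₁ : ℝ, |y₁| < c → ∀ r ∈ Set.uIcc (0:ℝ) y₁, |r| < c := by
    intro y₁ hy r hr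
    obtain ⟨h1, h2⟩ := abs_lt.1 hy
    rcases Set.mem_uIcc.1 hr with ⟨h3, h4⟩ | ⟨h3, h4⟩ <;>
      (rw [abs_lt]; constructor <;> linarith)
  -- vanishing of integrals over boundaries of rectangles with one side on ℝ
  have hrect : ∀ x₀ x₁ y₁ : ℝ, |y₁| < c →
      (∫ t in x₀..x₁, G t) - (∫ t in x₀..x₁, G (t + y₁ * Complex.I)) +
        Complex.I • (∫ s in (0:ℝ)..y₁, G (x₁ + s * Complex.I)) -
        Complex.I • (∫ s in (0:ℝ)..y₁, G (x₀ + s * Complex.I)) = 0 := by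
    intro x₀ x₁ y₁ hy
    have key := Complex.integral_boundary_rect_eq_zero_of_differentiable_on_off_countable G
      (x₀ : ℂ) ((x₁ : ℂ) + (y₁ : ℂ) * Complex.I) ∅ countable_empty ?_ ?_
    · simpa using key
    · intro v hv
      rw [Complex.mem_reProdIm] at hv
      simp only [Complex.add_re, Complex.ofReal_re, Complex.mul_re, Complex.I_re, Complex.I_im,
        Complex.ofReal_im, Complex.add_im, Complex.mul_im] at hv
      refine (hGcont v (hmemD v ?_)).continuousWithinAt
      have h2 : v.im ∈ Set.uIcc (0:ℝ) y₁ := by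
        convert hv.2 using 2 <;> ring
      exact habs_uIcc y₁ hy v.im h2
    · intro v hv
      obtain ⟨hv1, -⟩ := hv
      rw [Complex.mem_reProdIm] at hv1
      simp only [Complex.add_im, Complex.ofReal_im, Complex.mul_im, Complex.I_im, Complex.I_re,
        Complex.ofReal_re, Complex.add_re, Complex.mul_re] at hv1
      have h2 : v.im ∈ Set.Ioo (min 0 y₁) (max 0 y₁) := by
        convert hv1.2 using 3 <;> ring
      obtain ⟨h1, h2'⟩ := h2
      have him0 : v.im ≠ 0 := by
        rcases le_or_gt 0 y₁ with h | h
        · rw [min_eq_left h] at h1; exact h1.ne'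
        · rw [max_eq_left h.le] at h2'; exact h2'.ne
      have himc : |v.im| < c := by
        obtain ⟨hc1, hc2⟩ := abs_lt.1 hy
        rw [abs_lt]
        constructor
        · rcases le_total 0 y₁ with h | h
          · rw [min_eq_left h] at h1; linarith
          · rw [min_eq_right h] at h1; linarith
        · rcases le_total 0 y₁ with h | h
          · rw [max_eq_right h] at h2'; linarith
          · rw [max_eq_left h] at h2'; linarith
      exact hGdiff v (hmemD v himc) him0
  -- interval integrability helpers
  have hhoriz0 : Continuous fun t : ℝ => G (t : ℂ) := by
    refine continuous_iff_continuousAt.2 fun t => ?_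
    exact (hGcont _ (hmemD _ (by simpa using hc))).comp (by fun_prop)
  have hhoriz : ∀ y : ℝ, |y| < c → Continuous fun t : ℝ => G (t + y * Complex.I) := by
    intro y hy
    refine continuous_iff_continuousAt.2 fun t => ?_
    exact (hGcont _ (hmemD _ (by simpa using hy))).comp (by fun_prop)
  have hvert : ∀ x y₀ y₁ : ℝ, (∀ s ∈ Set.uIcc y₀ y₁, |s| < c) →
      IntervalIntegrable (fun s : ℝ => G (x + s * Complex.I)) volume y₀ y₁ := by
    intro x y₀ y₁ hsub
    refine (continuousOn_of_forall_continuousAt ?_).intervalIntegrable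
    intro s hs
    have hsc : |s| < c := hsub s hs
    exact (hGcont _ (hmemD _ (by simpa using hsc))).comp (by fun_prop)
  -- the primitive
  set F : ℂ → ℂ := fun w =>
    (∫ t in (0:ℝ)..w.re, G t) + Complex.I • ∫ s in (0:ℝ)..w.im, G (w.re + s * Complex.I)
    with hFdef
  have hFder : ∀ w ∈ D, HasDerivAt F (G w) w := by
    intro w hw
    have hyc : |w.im| < c := by rw [abs_lt]; exact hw
    rw [hasDerivAt_iff_isLittleO, Asymptotics.isLittleO_iff]
    intro ε hε
    obtain ⟨δ₁, hδ₁, hball⟩ := Metric.isOpen_iff.1 hDopen w hw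
    obtain ⟨δ₂, hδ₂, hδG⟩ := Metric.continuousAt_iff.1 (hGcont w hw) (ε / 2) (by positivity)
    have hδpos : (0:ℝ) < min δ₁ δ₂ / 2 := by positivity
    filter_upwards [Metric.ball_mem_nhds w hδpos] with v hv
    rw [Metric.mem_ball] at hv
    have hvD : v ∈ D := hball (by
      rw [Metric.mem_ball]
      exact hv.trans_le ((half_le_self (le_min hδ₁.le hδ₂.le)).trans (min_le_left _ _)))
    have hvc : |v.im| < c := by rw [abs_lt]; exact hvD
    have hdre : |v.re - w.re| ≤ dist v w := by
      rw [Complex.dist_eq]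
      exact (Complex.abs_re_le_norm (v - w)).trans_eq' (by rw [Complex.sub_re])
    have hdim : |v.im - w.im| ≤ dist v w := by
      rw [Complex.dist_eq]
      exact (Complex.abs_im_le_norm (v - w)).trans_eq' (by rw [Complex.sub_im])
    -- difference formula
    have i1 : IntervalIntegrable (fun t : ℝ => G (t : ℂ)) volume 0 w.re :=
      hhoriz0.intervalIntegrable _ _
    have i2 : IntervalIntegrable (fun t : ℝ => G (t : ℂ)) volume w.re v.re :=
      hhoriz0.intervalIntegrable _ _
    have huIcc : ∀ s : ℝ, s ∈ Set.uIcc w.im v.im → |s| < c := by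
      intro s hs
      obtain ⟨hw1, hw2⟩ := abs_lt.1 hyc
      obtain ⟨hv1, hv2⟩ := abs_lt.1 hvc
      rcases Set.mem_uIcc.1 hs with ⟨h3, h4⟩ | ⟨h3, h4⟩ <;> (rw [abs_lt]; constructor <;> linarith)
    have i3 : IntervalIntegrable (fun s : ℝ => G (v.re + s * Complex.I)) volume 0 w.im :=
      hvert _ _ _ (habs_uIcc w.im hyc)
    have i4 : IntervalIntegrable (fun s : ℝ => G (v.re + s * Complex.I)) volume w.im v.im :=
      hvert _ _ _ huIcc
    have s1 : (∫ t in (0:ℝ)..v.re, G (t:ℂ)) - ∫ t in (0:ℝ)..w.re, G (t:ℂ)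
        = ∫ t in w.re..v.re, G (t:ℂ) := by
      rw [← intervalIntegral.integral_add_adjacent_intervals i1 i2]; ring
    have s2 : (∫ s in (0:ℝ)..v.im, G (v.re + s * Complex.I))
        = (∫ s in (0:ℝ)..w.im, G (v.re + s * Complex.I))
          + ∫ s in w.im..v.im, G (v.re + s * Complex.I) :=
      (intervalIntegral.integral_add_adjacent_intervals i3 i4).symm
    have s3 := hrect w.re v.re w.im hyc
    have hdiff : F v - F w = (∫ t in w.re..v.re, G (t + w.im * Complex.I))
        + Complex.I * ∫ s in w.im..v.im, G (v.re + s * Complex.I) := by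
      rw [hFdef]
      simp only [smul_eq_mul] at s3 ⊢
      linear_combination s1 + Complex.I * s2 + s3
    -- the estimate
    have hmin2 : min δ₁ δ₂ / 2 ≤ δ₂ :=
      (half_le_self (le_min hδ₁.le hδ₂.le)).trans (min_le_right _ _)
    have hbound1 : ∀ t ∈ Set.uIoc w.re v.re, ‖G (↑t + ↑w.im * Complex.I) - G w‖ ≤ ε / 2 := by
      intro t ht
      have h1 : |t - w.re| ≤ |v.re - w.re| := by
        have h3 := le_abs_self (v.re - w.re)
        have h4 := neg_abs_le (v.re - w.re)
        rcases Set.mem_uIoc.1 ht with ⟨h5, h6⟩ | ⟨h5, h6⟩ <;> (rw [abs_le]; constructor <;> linarith)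
      have h2 : dist (↑t + ↑w.im * Complex.I) w < δ₂ := by
        rw [Complex.dist_eq]
        calc ‖↑t + ↑w.im * Complex.I - w‖
            ≤ |(↑t + ↑w.im * Complex.I - w).re| + |(↑t + ↑w.im * Complex.I - w).im| :=
              Complex.norm_le_abs_re_add_abs_im _
          _ = |t - w.re| := by simp
          _ ≤ dist v w := h1.trans hdre
          _ < δ₂ := hv.trans_le hmin2
      have h5 := hδG h2
      rw [dist_eq_norm] at h5
      exact h5.le
    have hbound2 : ∀ s ∈ Set.uIoc w.im v.im, ‖G (↑v.re + ↑s * Complex.I) - G w‖ ≤ ε / 2 := by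
      intro s hs
      have h1 : |s - w.im| ≤ |v.im - w.im| := by
        have h3 := le_abs_self (v.im - w.im)
        have h4 := neg_abs_le (v.im - w.im)
        rcases Set.mem_uIoc.1 hs with ⟨h5, h6⟩ | ⟨h5, h6⟩ <;> (rw [abs_le]; constructor <;> linarith)
      have h2 : dist (↑v.re + ↑s * Complex.I) w < δ₂ := by
        rw [Complex.dist_eq]
        calc ‖↑v.re + ↑s * Complex.I - w‖
            ≤ |(↑v.re + ↑s * Complex.I - w).re| + |(↑v.re + ↑s * Complex.I - w).im| :=
              Complex.norm_le_abs_re_add_abs_im _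
          _ = |v.re - w.re| + |s - w.im| := by simp
          _ ≤ dist v w + dist v w := add_le_add hdre (h1.trans hdim)
          _ < δ₂ := by
              have := min_le_right δ₁ δ₂
              linarith
      have h5 := hδG h2
      rw [dist_eq_norm] at h5
      exact h5.le
    have e1 : ∫ t in w.re..v.re, (G (↑t + ↑w.im * Complex.I) - G w)
        = (∫ t in w.re..v.re, G (↑t + ↑w.im * Complex.I)) - (↑v.re - ↑w.re) * G w := by
      rw [intervalIntegral.integral_sub ((hhoriz w.im hyc).intervalIntegrable _ _)
        intervalIntegrable_const, intervalIntegral.integral_const]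
      rw [Complex.real_smul]
      push_cast
      ring
    have e2 : ∫ s in w.im..v.im, (G (↑v.re + ↑s * Complex.I) - G w)
        = (∫ s in w.im..v.im, G (↑v.re + ↑s * Complex.I)) - (↑v.im - ↑w.im) * G w := by
      rw [intervalIntegral.integral_sub i4 intervalIntegrable_const,
        intervalIntegral.integral_const]
      rw [Complex.real_smul]
      push_cast
      ring
    have hvw : v - w = (↑v.re - ↑w.re) + (↑v.im - ↑w.im) * Complex.I := by
      apply Complex.ext <;> simp
    have key2 : F v - F w - (v - w) • G w
        = (∫ t in w.re..v.re, (G (↑t + ↑w.im * Complex.I) - G w))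
          + Complex.I * ∫ s in w.im..v.im, (G (↑v.re + ↑s * Complex.I) - G w) := by
      rw [smul_eq_mul, hvw]
      linear_combination hdiff - e1 - Complex.I * e2
    have n1 := intervalIntegral.norm_integral_le_of_norm_le_const hbound1
    have n2 := intervalIntegral.norm_integral_le_of_norm_le_const hbound2
    rw [key2]
    rw [dist_eq_norm] at hdre hdim
    refine (norm_add_le _ _).trans ?_
    rw [norm_mul, Complex.norm_I, one_mul]
    calc ‖∫ t in w.re..v.re, (G (↑t + ↑w.im * Complex.I) - G w)‖
          + ‖∫ s in w.im..v.im, (G (↑v.re + ↑s * Complex.I) - G w)‖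
        ≤ ε / 2 * |v.re - w.re| + ε / 2 * |v.im - w.im| := add_le_add n1 n2
      _ ≤ ε / 2 * ‖v - w‖ + ε / 2 * ‖v - w‖ := by gcongr
      _ = ε * ‖v - w‖ := by ring
  -- F is holomorphic on D, hence so is its derivative G
  have hFdiff : DifferentiableOn ℂ F D := fun v hv =>
    (hFder v hv).differentiableAt.differentiableWithinAt
  have hFan : AnalyticOnNhd ℂ F D := hFdiff.analyticOnNhd hDopen
  have hGan : AnalyticOnNhd ℂ G D := by
    intro v hv
    refine (hFan.deriv v hv).congr ?_
    filter_upwards [hDopen.mem_nhds hv] with u hu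
    exact ((hFder u hu).deriv)
  -- identity theorem
  have hDconv : Convex ℝ D :=
    (convex_halfSpace_im_gt (-c)).inter (convex_halfSpace_im_lt c)
  have h0D : (0 : ℂ) ∈ D := by
    rw [hD, mem_preimage, Complex.zero_im]
    exact ⟨neg_neg_iff_pos.2 hc, hc⟩
  have hfreq : ∃ᶠ u in 𝓝[≠] (0 : ℂ), G u = 0 := by
    rw [Filter.frequently_iff]
    intro U hU
    obtain ⟨ε, hε, hball⟩ := Metric.mem_nhdsWithin_iff.1 hU
    refine ⟨((ε / 2 : ℝ) : ℂ), hball ⟨?_, ?_⟩, hreal _⟩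
    · rw [Metric.mem_ball, dist_zero_right, Complex.norm_real, Real.norm_eq_abs,
        abs_of_pos (half_pos hε)]
      exact half_lt_self hε
    · simp only [mem_compl_iff, mem_singleton_iff]
      exact_mod_cast (half_pos hε).ne'
  have hGzero : EqOn G 0 D :=
    hGan.eqOn_zero_of_preconnected_of_frequently_eq_zero hDconv.isPreconnected h0D hfreq
  -- conclusion, first on the open strip, then on the closed one by continuity
  intro w hw
  have hT : w ∈ closure (Complex.im ⁻¹' Ioo 0 c) := by
    rw [Complex.closure_preimage_im, closure_Ioo hc.ne]
    exact hw
  haveI : (𝓝[Complex.im ⁻¹' Ioo 0 c] w).NeBot := mem_closure_iff_nhdsWithin_neBot.1 hT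
  have h1 : Tendsto g (𝓝[Complex.im ⁻¹' Ioo 0 c] w) (𝓝 (g w)) :=
    (hgc w hw).mono (preimage_mono Ioo_subset_Icc_self)
  have h2 : Tendsto g (𝓝[Complex.im ⁻¹' Ioo 0 c] w) (𝓝 0) := by
    refine tendsto_const_nhds.congr' ?_
    filter_upwards [self_mem_nhdsWithin] with u hu
    have huD : u ∈ D := hmemD u (by
      rw [abs_lt]; exact ⟨by linarith [hu.1], hu.2⟩)
    rw [← hGpos u hu.1.le, hGzero huD, Pi.zero_apply]
  exact tendsto_nhds_unique h1 h2

end Reflection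
/-- The strip as a preimage of a closed interval. -/
lemma hStrip_eq (z : ℂ) :
    hStrip z = Complex.im ⁻¹' Icc (min 0 z.im) (max 0 z.im) := by
  ext w
  simp [hStrip, Set.uIcc_eq_union, Set.mem_Icc, Set.uIcc]

lemma interior_hStrip (z : ℂ) :
    interior (hStrip z) = Complex.im ⁻¹' Ioo (min 0 z.im) (max 0 z.im) := by
  rw [hStrip_eq, Complex.interior_preimage_im, interior_Icc]

/-- Vector-valued uniqueness: a function continuous on the strip, analytic inside,
vanishing on `ℝ`, vanishes identically. -/
lemma strip_eq_zeroE {E : Type*} [NormedAddCommGroup E] [NormedSpace ℂ E] {z : ℂ}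
    (hz : z.im ≠ 0) {h : ℂ → E} (hcont : ContinuousOn h (hStrip z))
    (hdiff : DifferentiableOn ℂ h (interior (hStrip z))) (h0 : ∀ t : ℝ, h t = 0) :
    ∀ w ∈ hStrip z, h w = 0 := by
  intro w hw
  refine NormedSpace.eq_zero_of_forall_dual_eq_zero ℂ fun φ => ?_
  set g : ℂ → ℂ := fun v => φ (h v) with hg
  have hgc : ContinuousOn g (hStrip z) := φ.continuous.comp_continuousOn hcont
  have hgd : DifferentiableOn ℂ g (interior (hStrip z)) :=
    φ.differentiable.comp_differentiableOn hdiff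
  have hg0 : ∀ t : ℝ, g t = 0 := fun t => by rw [hg]; simp [h0 t]
  rcases hz.lt_or_gt with hneg | hpos
  · set c := -z.im with hc
    have hcpos : 0 < c := neg_pos.2 hneg
    have hmin : min 0 z.im = z.im := min_eq_right hneg.le
    have hmax : max 0 z.im = 0 := max_eq_left hneg.le
    set g' : ℂ → ℂ := fun v => (starRingEnd ℂ) (g ((starRingEnd ℂ) v)) with hg'
    have hmapIcc : ∀ v : ℂ, v.im ∈ Icc 0 c → (starRingEnd ℂ) v ∈ hStrip z := by
      intro v hv
      rw [hStrip_eq, mem_preimage, Complex.conj_im, hmin, hmax, mem_Icc]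
      exact ⟨by linarith [hv.2], by linarith [hv.1]⟩
    have hg'c : ContinuousOn g' (Complex.im ⁻¹' Icc 0 c) := by
      refine Complex.continuous_conj.comp_continuousOn ?_
      exact hgc.comp Complex.continuous_conj.continuousOn fun v hv => hmapIcc v hv
    have hg'd : DifferentiableOn ℂ g' (Complex.im ⁻¹' Ioo 0 c) := by
      intro v hv
      rw [mem_preimage] at hv
      have hcv : (starRingEnd ℂ) v ∈ interior (hStrip z) := by
        rw [interior_hStrip, mem_preimage, Complex.conj_im, hmin, hmax, mem_Ioo]
        exact ⟨by linarith [hv.2], by linarith [hv.1]⟩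
      have hd := (hgd.differentiableAt (isOpen_interior.mem_nhds hcv)).hasDerivAt
      exact (hasDerivAt_conj_conj hd).differentiableAt.differentiableWithinAt
    have hg'0 : ∀ t : ℝ, g' t = 0 := fun t => by
      simp only [hg', Complex.conj_ofReal, hg0 t, map_zero]
    have hwmem : ((starRingEnd ℂ) w).im ∈ Icc 0 c := by
      rw [hStrip_eq, mem_preimage, hmin, hmax, mem_Icc] at hw
      rw [Complex.conj_im, mem_Icc]
      exact ⟨by linarith [hw.2], by linarith [hw.1]⟩
    have hkey := strip_eq_zero hcpos hg'c hg'd hg'0 ((starRingEnd ℂ) w) hwmem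
    simp only [hg', Complex.conj_conj] at hkey
    have : g w = 0 := by
      have := congrArg (starRingEnd ℂ) hkey
      simpa using this
    exact this
  · have hmin : min 0 z.im = 0 := min_eq_left hpos.le
    have hmax : max 0 z.im = z.im := max_eq_right hpos.le
    have hgc' : ContinuousOn g (Complex.im ⁻¹' Icc 0 z.im) := by
      rwa [hStrip_eq, hmin, hmax] at hgc
    have hgd' : DifferentiableOn ℂ g (Complex.im ⁻¹' Ioo 0 z.im) := by
      rwa [interior_hStrip, hmin, hmax] at hgd
    refine strip_eq_zero hpos hgc' hgd' hg0 w ?_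
    rwa [hStrip_eq, hmin, hmax, mem_preimage] at hw

lemma mem_hStrip {z w : ℂ} : w ∈ hStrip z ↔ w.im ∈ Set.uIcc 0 z.im := Iff.rfl

/-- The functional equation `f (t + w) = α t (f w)` for any continuation witness. -/
lemma funEq {E : Type*} [NormedAddCommGroup E] [NormedSpace ℂ E]
    {α : ℝ → E →L[ℂ] E} (hα : IsOneParamRep α) {z : ℂ} (hz : z.im ≠ 0) {a : E} {f : ℂ → E}
    (hfc : ContinuousOn f (hStrip z)) (hfd : DifferentiableOn ℂ f (interior (hStrip z)))
    (hfr : ∀ t : ℝ, f t = α t a) :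
    ∀ (t : ℝ), ∀ w ∈ hStrip z, f (↑t + w) = α t (f w) := by
  intro t
  have htrans : MapsTo (fun w : ℂ => (↑t + w)) (hStrip z) (hStrip z) := by
    intro w hw
    simpa [mem_hStrip] using hw
  have htransi : MapsTo (fun w : ℂ => (↑t + w)) (interior (hStrip z)) (interior (hStrip z)) := by
    intro w hw
    rw [interior_hStrip, mem_preimage] at hw ⊢
    simpa using hw
  set h : ℂ → E := fun w => f (↑t + w) - α t (f w) with hh
  have hcont : ContinuousOn h (hStrip z) := by
    refine ContinuousOn.sub ?_ ((α t).continuous.comp_continuousOn hfc)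
    exact hfc.comp (continuous_const.add continuous_id).continuousOn htrans
  have hdiff : DifferentiableOn ℂ h (interior (hStrip z)) := by
    refine DifferentiableOn.sub ?_ ((α t).differentiable.comp_differentiableOn hfd)
    exact hfd.comp ((differentiable_const _).add differentiable_id).differentiableOn htransi
  have h0 : ∀ s : ℝ, h s = 0 := by
    intro s
    have hcast : ((t : ℂ) + (s : ℝ)) = ((t + s : ℝ) : ℂ) := by push_cast; ring
    simp only [hh, hcast, hfr]
    rw [hα.map_add t s]
    simp [ContinuousLinearMap.comp_apply, sub_eq_zero]
  intro w hw
  have := strip_eq_zeroE hz hcont hdiff h0 w hw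
  simp only [hh] at this
  exact sub_eq_zero.1 this

/-- Three-lines bound for a continuation witness of the pair `(Δa, Δb)`. -/
lemma witness_bound {E : Type*} [NormedAddCommGroup E] [NormedSpace ℂ E]
    {α : ℝ → E →L[ℂ] E} (hα : IsOneParamRep α) {z : ℂ} (hz : z.im ≠ 0) {Δa Δb : E} {g : ℂ → E}
    (hgc : ContinuousOn g (hStrip z)) (hgd : DifferentiableOn ℂ g (interior (hStrip z)))
    (hgr : ∀ t : ℝ, g t = α t Δa) (hgz : g z = Δb) :
    ∀ w ∈ hStrip z, ‖g w‖ ≤ max ‖Δa‖ ‖Δb‖ := by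
  have FE := funEq hα hz hgc hgd hgr
  have hnorm : ∀ (t : ℝ) (x : E), ‖α t x‖ ≤ ‖x‖ := by
    intro t x
    calc ‖α t x‖ ≤ ‖α t‖ * ‖x‖ := (α t).le_opNorm x
      _ ≤ 1 * ‖x‖ := mul_le_mul_of_nonneg_right (hα.norm_le t) (norm_nonneg x)
      _ = ‖x‖ := one_mul _
  have hiy : ∀ y : ℝ, y ∈ Set.uIcc 0 z.im → ((y : ℂ) * Complex.I) ∈ hStrip z := by
    intro y hy
    simpa [mem_hStrip] using hy
  have hrep : ∀ w ∈ hStrip z, g w = α w.re (g ((w.im : ℂ) * Complex.I)) := by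
    intro w hw
    have h1 : ((w.im : ℂ) * Complex.I) ∈ hStrip z := hiy _ (by simpa [mem_hStrip] using hw)
    have h2 := FE w.re _ h1
    rwa [Complex.re_add_im] at h2
  obtain ⟨M, hM⟩ := (isCompact_uIcc (a := (0:ℝ)) (b := z.im)).exists_bound_of_continuousOn
    (f := fun y : ℝ => g ((y : ℂ) * Complex.I))
    (hgc.comp (by fun_prop) fun y hy => hiy y hy)
  have hAB : min 0 z.im < max 0 z.im := min_lt_max.2 (Ne.symm hz)
  have hBdd : ∀ w ∈ Complex.im ⁻¹' Ioo (min 0 z.im) (max 0 z.im), ‖g w‖ ≤ M := by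
    intro w hw
    rw [mem_preimage] at hw
    have hw' : w ∈ hStrip z := by
      rw [hStrip_eq, mem_preimage]
      exact Ioo_subset_Icc_self hw
    rw [hrep w hw']
    exact (hnorm _ _).trans (hM _ (Ioo_subset_Icc_self hw))
  have hbot : ∀ w : ℂ, w.im = 0 → ‖g w‖ ≤ max ‖Δa‖ ‖Δb‖ := by
    intro w hw0
    have hwr : w = (w.re : ℂ) := Complex.ext rfl (by simp [hw0])
    rw [hwr, hgr]
    exact (hnorm _ _).trans (le_max_left _ _)
  have htop : ∀ w : ℂ, w.im = z.im → ‖g w‖ ≤ max ‖Δa‖ ‖Δb‖ := by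
    intro w hwz
    have hzmem : z ∈ hStrip z := by
      rw [mem_hStrip]; exact Set.right_mem_uIcc
    have h1 := FE (w.re - z.re) z hzmem
    have h2 : ((w.re - z.re : ℝ) : ℂ) + z = w := by
      apply Complex.ext <;> simp [hwz]
    rw [h2, hgz] at h1
    rw [h1]
    exact (hnorm _ _).trans (le_max_right _ _)
  intro w hw
  have hwIcc : w.im ∈ Icc (min 0 z.im) (max 0 z.im) := by
    rwa [hStrip_eq, mem_preimage] at hw
  refine PhragmenLindelof.horizontal_strip ?_ ?_ ?_ ?_ hwIcc.1 hwIcc.2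
  · constructor
    · rw [← interior_hStrip]; exact hgd
    · rw [Complex.closure_preimage_im, closure_Ioo hAB.ne, ← hStrip_eq]; exact hgc
  · refine ⟨0, div_pos Real.pi_pos (sub_pos.2 hAB), 0, ?_⟩
    rw [Asymptotics.isBigO_iff]
    refine ⟨M, ?_⟩
    rw [Filter.eventually_inf_principal]
    refine Filter.Eventually.of_forall fun v hv => ?_
    simpa using hBdd v hv
  · intro v hv
    rcases min_cases 0 z.im with ⟨h1, -⟩ | ⟨h1, -⟩
    · exact hbot v (hv.trans h1)
    · exact htop v (hv.trans h1)
  · intro v hv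
    rcases max_cases 0 z.im with ⟨h1, -⟩ | ⟨h1, -⟩
    · exact hbot v (hv.trans h1)
    · exact htop v (hv.trans h1)

/-- `(a, b)` lies in the graph of the analytic continuation `α_z`:  there is a function `f`,
continuous on the strip `S(z)`, analytic in its interior, agreeing with `t ↦ α_t a` on `ℝ`,
with `f z = b`. -/
def HasContVal {E : Type*} [NormedAddCommGroup E] [NormedSpace ℂ E]
    (α : ℝ → E →L[ℂ] E) (z : ℂ) (a b : E) : Prop :=
  ∃ f : ℂ → E, ContinuousOn f (hStrip z) ∧
    DifferentiableOn ℂ f (interior (hStrip z)) ∧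
    (∀ t : ℝ, f t = α t a) ∧ f z = b

/-- `α_z` is a closed operator: if `aₖ ∈ D(α_z)`, `aₖ → a` and `α_z aₖ → b` in norm, then
`a ∈ D(α_z)` and `α_z a = b`. -/
theorem cont_closed
    {E : Type*} [NormedAddCommGroup E] [NormedSpace ℂ E] [CompleteSpace E]
    {α : ℝ → E →L[ℂ] E} (hα : IsOneParamRep α) (z : ℂ) (a b : E) (as bs : ℕ → E)
    (h : ∀ k, HasContVal α z (as k) (bs k))
    (ha : Tendsto as atTop (nhds a)) (hb : Tendsto bs atTop (nhds b)) :
    HasContVal α z a b := by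
  by_cases hz : z.im = 0
  · -- degenerate case: the strip is the real line
    have hzr : z = (z.re : ℂ) := Complex.ext rfl (by simp [hz])
    refine ⟨fun w => α w.re a, ?_, ?_, ?_, ?_⟩
    · exact ((hα.strong_cont a).comp Complex.continuous_re).continuousOn
    · have : interior (hStrip z) = ∅ := by
        rw [interior_hStrip, hz]
        simp
      rw [this]
      exact differentiableOn_empty
    · intro t; simp
    · have h1 : Tendsto bs atTop (nhds (α z.re a)) := by
        have h2 : Tendsto (fun k => α z.re (as k)) atTop (nhds (α z.re a)) :=
          ((α z.re).continuous.tendsto a).comp ha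
        refine h2.congr fun k => ?_
        obtain ⟨f, -, -, hfr, hfz⟩ := h k
        rw [← hfz, hzr, hfr]; simp
      simpa using tendsto_nhds_unique h1 hb
  · -- main case
    choose f hf1 hf2 hf3 hf4 using h
    have key : ∀ m n : ℕ, ∀ w ∈ hStrip z,
        ‖f m w - f n w‖ ≤ max ‖as m - as n‖ ‖bs m - bs n‖ := by
      intro m n
      refine witness_bound hα hz ((hf1 m).sub (hf1 n)) ((hf2 m).sub (hf2 n)) ?_ ?_
      · intro t; rw [hf3 m, hf3 n, map_sub]
      · rw [hf4 m, hf4 n]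
    have hucs : UniformCauchySeqOn f atTop (hStrip z) := by
      rw [Metric.uniformCauchySeqOn_iff]
      intro ε hε
      obtain ⟨N₁, hN₁⟩ := Metric.cauchySeq_iff.1 ha.cauchySeq ε hε
      obtain ⟨N₂, hN₂⟩ := Metric.cauchySeq_iff.1 hb.cauchySeq ε hε
      refine ⟨max N₁ N₂, fun m hm n hn x hx => ?_⟩
      rw [dist_eq_norm]
      refine (key m n x hx).trans_lt (max_lt ?_ ?_)
      · rw [← dist_eq_norm]
        exact hN₁ m (le_of_max_le_left hm) n (le_of_max_le_left hn)
      · rw [← dist_eq_norm]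
        exact hN₂ m (le_of_max_le_right hm) n (le_of_max_le_right hn)
    have hcau : ∀ x ∈ hStrip z, CauchySeq fun k => f k x := by
      intro x hx
      rw [Metric.cauchySeq_iff]
      intro ε hε
      obtain ⟨N, hN⟩ := Metric.uniformCauchySeqOn_iff.1 hucs ε hε
      exact ⟨N, fun m hm n hn => hN m hm n hn x hx⟩
    set F : ℂ → E := fun x => limUnder atTop fun k => f k x with hF
    have htend : ∀ x ∈ hStrip z, Tendsto (fun k => f k x) atTop (nhds (F x)) :=
      fun x hx => (hcau x hx).tendsto_limUnder
    have htu : TendstoUniformlyOn f F atTop (hStrip z) :=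
      hucs.tendstoUniformlyOn_of_tendsto htend
    have hmem0 : ∀ t : ℝ, (t : ℂ) ∈ hStrip z := by
      intro t
      rw [mem_hStrip]
      simp [Set.left_mem_uIcc]
    have hmemz : z ∈ hStrip z := by
      rw [mem_hStrip]; exact Set.right_mem_uIcc
    refine ⟨F, ?_, ?_, ?_, ?_⟩
    · exact htu.continuousOn (Filter.Frequently.of_forall hf1)
    · exact (htu.tendstoLocallyUniformlyOn.mono interior_subset).differentiableOn
        (Filter.Eventually.of_forall hf2) isOpen_interior
    · intro t
      have h1 : Tendsto (fun k => f k (t : ℂ)) atTop (nhds (α t a)) := by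
        have h2 : Tendsto (fun k => α t (as k)) atTop (nhds (α t a)) :=
          ((α t).continuous.tendsto a).comp ha
        exact h2.congr fun k => (hf3 k t).symm
      exact tendsto_nhds_unique (htend _ (hmem0 t)) h1
    · have h1 : Tendsto (fun k => f k z) atTop (nhds b) := by
        refine hb.congr fun k => (hf4 k).symm
      exact tendsto_nhds_unique (htend z hmemz) h1
end
end

section
/- Let α be a strongly continuous one-parameter isometric representation on a Banach space E, z ∈ ℂ, and C a core for α_z. Then for every x ∈ D(α_z) there exists a sequence (x_n) in C such that ‖x_n‖ ≤ ‖x‖ and ‖α_z(x_n)‖ ≤ ‖α_z(x)‖ for every n, and x_n → x, α_z(x_n) → α_z(x) in norm. -/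
open Complex MeasureTheory Filter Topology Set

noncomputable section

section AuxUniqueness

open intervalIntegral


lemma conj_conj_hasDerivAt {g : ℂ → ℂ} {u d : ℂ}
    (h : HasDerivAt g d ((starRingEnd ℂ) u)) :
    HasDerivAt (fun w => (starRingEnd ℂ) (g ((starRingEnd ℂ) w))) ((starRingEnd ℂ) d) u := by
  rw [hasDerivAt_iff_tendsto] at h ⊢
  have hconj : Filter.Tendsto (starRingEnd ℂ) (nhds u) (nhds ((starRingEnd ℂ) u)) :=
    (Complex.continuous_conj).continuousAt
  refine (h.comp hconj).congr (fun w => ?_)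
  simp only [Function.comp]
  rw [← map_sub (starRingEnd ℂ) w u]
  have key : (starRingEnd ℂ) (g ((starRingEnd ℂ) w)) - (starRingEnd ℂ) (g ((starRingEnd ℂ) u))
      - (w - u) • (starRingEnd ℂ) d
      = (starRingEnd ℂ) (g ((starRingEnd ℂ) w) - g ((starRingEnd ℂ) u)
          - ((starRingEnd ℂ) (w - u)) • d) := by
    simp only [map_sub, smul_eq_mul, map_mul, conj_conj]
  rw [key, RCLike.norm_conj, RCLike.norm_conj]

lemma conj_conj_diff {g : ℂ → ℂ} {u : ℂ}
    (h : DifferentiableAt ℂ g ((starRingEnd ℂ) u)) :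
    DifferentiableAt ℂ (fun w => (starRingEnd ℂ) (g ((starRingEnd ℂ) w))) u :=
  (conj_conj_hasDerivAt h.hasDerivAt).differentiableAt

lemma rect_split {G : ℂ → ℂ} (z w : ℂ)
    (Hc : ContinuousOn G (uIcc z.re w.re ×ℂ uIcc z.im w.im))
    (Hd : ∀ v ∈ Ioo (z.re ⊓ w.re) (z.re ⊔ w.re) ×ℂ Ioo (z.im ⊓ w.im) (z.im ⊔ w.im),
      v.im ≠ 0 → DifferentiableAt ℂ G v) :
    (((∫ x : ℝ in z.re..w.re, G (x + z.im * I)) - ∫ x : ℝ in z.re..w.re, G (x + w.im * I)) +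
      I • ∫ y : ℝ in z.im..w.im, G (w.re + y * I)) -
      I • ∫ y : ℝ in z.im..w.im, G (z.re + y * I) = 0 := by
  by_cases h0 : (0:ℝ) ∈ Ioo (z.im ⊓ w.im) (z.im ⊔ w.im)
  · -- split into two rectangles at im = 0
    have h0' : (0:ℝ) ∈ uIcc z.im w.im := Ioo_subset_Icc_self h0
    have hsub1 : uIcc z.re w.re ×ℂ uIcc z.im (0:ℝ) ⊆ uIcc z.re w.re ×ℂ uIcc z.im w.im := by
      intro v hv; rcases mem_reProdIm.1 hv with ⟨h1, h2⟩
      exact mem_reProdIm.2 ⟨h1, uIcc_subset_uIcc left_mem_uIcc h0' h2⟩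
    have hsub2 : uIcc z.re w.re ×ℂ uIcc (0:ℝ) w.im ⊆ uIcc z.re w.re ×ℂ uIcc z.im w.im := by
      intro v hv; rcases mem_reProdIm.1 hv with ⟨h1, h2⟩
      exact mem_reProdIm.2 ⟨h1, uIcc_subset_uIcc h0' right_mem_uIcc h2⟩
    have hIoo1 : Ioo (z.im ⊓ 0) (z.im ⊔ 0) ⊆ Ioo (z.im ⊓ w.im) (z.im ⊔ w.im) :=
      Ioo_subset_Ioo (le_min (min_le_left _ _) h0.1.le) (max_le (le_max_left _ _) h0.2.le)
    have hIoo2 : Ioo ((0:ℝ) ⊓ w.im) ((0:ℝ) ⊔ w.im) ⊆ Ioo (z.im ⊓ w.im) (z.im ⊔ w.im) :=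
      Ioo_subset_Ioo (le_min h0.1.le (min_le_right _ _)) (max_le h0.2.le (le_max_right _ _))
    have A := Complex.integral_boundary_rect_eq_zero_of_differentiable_on_off_countable G
      z ((w.re : ℂ)) ∅ countable_empty ?_ ?_
    rotate_left
    · simpa using Hc.mono hsub1
    · intro v hv
      simp only [diff_empty, Complex.ofReal_re, Complex.ofReal_im] at hv
      rcases mem_reProdIm.1 hv with ⟨h1, h2⟩
      have hvim : v.im ≠ 0 := by
        rcases h2 with ⟨ha, hb⟩
        rcases le_or_gt 0 z.im with h | h
        · rw [min_eq_right h] at ha; exact ha.ne'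
        · rw [max_eq_right h.le] at hb; exact hb.ne
      exact Hd v (mem_reProdIm.2 ⟨h1, hIoo1 h2⟩) hvim
    have B := Complex.integral_boundary_rect_eq_zero_of_differentiable_on_off_countable G
      ((z.re : ℂ)) w ∅ countable_empty ?_ ?_
    rotate_left
    · simpa using Hc.mono hsub2
    · intro v hv
      simp only [diff_empty, Complex.ofReal_re, Complex.ofReal_im] at hv
      rcases mem_reProdIm.1 hv with ⟨h1, h2⟩
      have hvim : v.im ≠ 0 := by
        rcases h2 with ⟨ha, hb⟩
        rcases le_or_gt 0 w.im with h | h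
        · rw [min_eq_left h] at ha; exact ha.ne'
        · rw [max_eq_left h.le] at hb; exact hb.ne
      exact Hd v (mem_reProdIm.2 ⟨h1, hIoo2 h2⟩) hvim
    simp only [Complex.ofReal_re, Complex.ofReal_im] at A B
    have hC1 : IntervalIntegrable (fun y : ℝ => G (w.re + y * I)) MeasureTheory.volume z.im 0 := by
      apply ContinuousOn.intervalIntegrable
      refine Hc.comp (by fun_prop) ?_
      intro y hy
      exact mem_reProdIm.2 ⟨by simp, by simpa using uIcc_subset_uIcc left_mem_uIcc h0' hy⟩
    have hC1' : IntervalIntegrable (fun y : ℝ => G (w.re + y * I)) MeasureTheory.volume 0 w.im := by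
      apply ContinuousOn.intervalIntegrable
      refine Hc.comp (by fun_prop) ?_
      intro y hy
      exact mem_reProdIm.2 ⟨by simp, by simpa using uIcc_subset_uIcc h0' right_mem_uIcc hy⟩
    have hC2 : IntervalIntegrable (fun y : ℝ => G (z.re + y * I)) MeasureTheory.volume z.im 0 := by
      apply ContinuousOn.intervalIntegrable
      refine Hc.comp (by fun_prop) ?_
      intro y hy
      exact mem_reProdIm.2 ⟨by simp, by simpa using uIcc_subset_uIcc left_mem_uIcc h0' hy⟩
    have hC2' : IntervalIntegrable (fun y : ℝ => G (z.re + y * I)) MeasureTheory.volume 0 w.im := by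
      apply ContinuousOn.intervalIntegrable
      refine Hc.comp (by fun_prop) ?_
      intro y hy
      exact mem_reProdIm.2 ⟨by simp, by simpa using uIcc_subset_uIcc h0' right_mem_uIcc hy⟩
    have S1 := integral_add_adjacent_intervals hC1 hC1'
    have S2 := integral_add_adjacent_intervals hC2 hC2'
    simp only [smul_eq_mul] at A B ⊢
    linear_combination A + B - I * S1 + I * S2
  · exact Complex.integral_boundary_rect_eq_zero_of_differentiable_on_off_countable G z w ∅
      countable_empty Hc (fun v hv => Hd v (by simpa using hv)
        (fun h => h0 (h ▸ (mem_reProdIm.1 (by simpa using hv)).2)))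

lemma rect_split_coords {G : ℂ → ℂ} (x₁ x₂ y₁ y₂ : ℝ)
    (Hc : ContinuousOn G (uIcc x₁ x₂ ×ℂ uIcc y₁ y₂))
    (Hd : ∀ v ∈ Ioo (x₁ ⊓ x₂) (x₁ ⊔ x₂) ×ℂ Ioo (y₁ ⊓ y₂) (y₁ ⊔ y₂),
      v.im ≠ 0 → DifferentiableAt ℂ G v) :
    (((∫ x : ℝ in x₁..x₂, G (x + y₁ * I)) - ∫ x : ℝ in x₁..x₂, G (x + y₂ * I)) +
      I * ∫ y : ℝ in y₁..y₂, G (x₂ + y * I)) - I * ∫ y : ℝ in y₁..y₂, G (x₁ + y * I) = 0 := by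
  have h := rect_split (z := (x₁ : ℂ) + (y₁ : ℂ) * I) (w := (x₂ : ℂ) + (y₂ : ℂ) * I)
    (by simpa using Hc) (by simpa using Hd)
  simpa [smul_eq_mul] using h

lemma primitive_diff {G : ℂ → ℂ} {a b : ℝ} (ha : a < 0) (hb : 0 < b)
    (Hc : ContinuousOn G (Complex.im ⁻¹' Ioo a b))
    (Hd : ∀ v : ℂ, v.im ∈ Ioo a b → v.im ≠ 0 → DifferentiableAt ℂ G v) :
    ∀ w₀ : ℂ, w₀.im ∈ Ioo a b → DifferentiableAt ℂ G w₀ := by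
  intro w₀ hw₀
  have hopen : IsOpen (Complex.im ⁻¹' Ioo a b) := isOpen_Ioo.preimage Complex.continuous_im
  set r : ℝ := min (b - w₀.im) (w₀.im - a) / 2 with hrdef
  have hr : 0 < r := by
    have h1 : 0 < b - w₀.im := by linarith [hw₀.2]
    have h2 : 0 < w₀.im - a := by linarith [hw₀.1]
    positivity
  have hyin : ∀ y : ℝ, |y - w₀.im| ≤ r → y ∈ Ioo a b := by
    intro y hy
    rcases abs_le.1 hy with ⟨h1, h2⟩
    have hm1 : min (b - w₀.im) (w₀.im - a) ≤ b - w₀.im := min_le_left _ _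
    have hm2 : min (b - w₀.im) (w₀.im - a) ≤ w₀.im - a := min_le_right _ _
    constructor <;> [nlinarith; nlinarith]
  -- segment integrability
  have hIntX : ∀ y u v : ℝ, |y - w₀.im| ≤ r →
      IntervalIntegrable (fun t : ℝ => G (t + y * I)) MeasureTheory.volume u v := by
    intro y u v hy
    apply ContinuousOn.intervalIntegrable
    refine Hc.comp (by fun_prop) ?_
    intro t _
    simpa using hyin y hy
  have hmemIcc : ∀ u v s : ℝ, |u - w₀.im| ≤ r → |v - w₀.im| ≤ r → s ∈ uIcc u v →
      |s - w₀.im| ≤ r := by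
    intro u v s hu hv hs
    rcases abs_le.1 hu with ⟨hu1, hu2⟩
    rcases abs_le.1 hv with ⟨hv1, hv2⟩
    have h1 : min u v ≤ s := hs.1
    have h2 : s ≤ max u v := hs.2
    rcases le_total u v with h | h
    · rw [min_eq_left h] at h1; rw [max_eq_right h] at h2; rw [abs_le]; constructor <;> linarith
    · rw [min_eq_right h] at h1; rw [max_eq_left h] at h2; rw [abs_le]; constructor <;> linarith
  have hIntY : ∀ x u v : ℝ, |x - w₀.re| ≤ r → |u - w₀.im| ≤ r → |v - w₀.im| ≤ r →
      IntervalIntegrable (fun s : ℝ => G (x + s * I)) MeasureTheory.volume u v := by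
    intro x u v hx hu hv
    apply ContinuousOn.intervalIntegrable
    refine Hc.comp (by fun_prop) ?_
    intro s hs
    simpa using hyin s (hmemIcc u v s hu hv hs)
  -- the primitive
  set F : ℂ → ℂ := fun w => (∫ t : ℝ in w₀.re..w.re, G (t + w₀.im * I)) +
      I * ∫ s : ℝ in w₀.im..w.im, G (w.re + s * I) with hFdef
  -- path independence
  have claim1 : ∀ w₁ w : ℂ, |w₁.re - w₀.re| ≤ r → |w₁.im - w₀.im| ≤ r →
      |w.re - w₀.re| ≤ r → |w.im - w₀.im| ≤ r →
      F w - F w₁ = (∫ t : ℝ in w₁.re..w.re, G (t + w₁.im * I)) +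
        I * ∫ s : ℝ in w₁.im..w.im, G (w.re + s * I) := by
    intro w₁ w h1re h1im hwre hwim
    have hself : |w₀.im - w₀.im| ≤ r := by simp [hr.le]
    have hselfre : |w₀.re - w₀.re| ≤ r := by simp [hr.le]
    have R1 := rect_split_coords (G := G) w₁.re w.re w₀.im w₁.im ?_ ?_
    rotate_left
    · refine Hc.mono ?_
      intro v hv
      rcases mem_reProdIm.1 hv with ⟨_, h2⟩
      exact hyin v.im (hmemIcc w₀.im w₁.im v.im hself h1im h2)
    · intro v hv hvim
      rcases mem_reProdIm.1 hv with ⟨_, h2⟩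
      exact Hd v (hyin v.im (hmemIcc w₀.im w₁.im v.im hself h1im (Ioo_subset_Icc_self h2))) hvim
    have S1 := integral_add_adjacent_intervals (a := w₀.re) (b := w₁.re) (c := w.re)
      (hIntX w₀.im w₀.re w₁.re hself) (hIntX w₀.im w₁.re w.re hself)
    have S2 := integral_add_adjacent_intervals (a := w₀.im) (b := w₁.im) (c := w.im)
      (hIntY w.re w₀.im w₁.im hwre hself h1im) (hIntY w.re w₁.im w.im hwre h1im hwim)
    simp only [hFdef]
    linear_combination R1 - S1 - I * S2
  -- derivative
  have claim2 : ∀ w₁ : ℂ, |w₁.re - w₀.re| < r → |w₁.im - w₀.im| < r →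
      HasDerivAt F (G w₁) w₁ := by
    intro w₁ h1re h1im
    rw [hasDerivAt_iff_isLittleO, Asymptotics.isLittleO_iff]
    intro c hc
    have hG1 : ContinuousAt G w₁ := by
      refine Hc.continuousAt (hopen.mem_nhds ?_)
      exact hyin w₁.im h1im.le
    rcases Metric.continuousAt_iff.1 hG1 (c/2) (by positivity) with ⟨δ, hδpos, hδ⟩
    set ε : ℝ := min (δ/2) (min (r - |w₁.re - w₀.re|) (r - |w₁.im - w₀.im|)) with hεdef
    have hε : 0 < ε := by
      apply lt_min (by positivity) (lt_min (by linarith) (by linarith))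
    filter_upwards [Metric.ball_mem_nhds w₁ hε] with w hw
    rw [Metric.mem_ball] at hw
    have hdist : dist w w₁ = ‖w - w₁‖ := Complex.dist_eq w w₁
    have hre : |w.re - w₁.re| ≤ dist w w₁ := by
      rw [hdist, ← Complex.sub_re]; exact Complex.abs_re_le_norm _
    have him : |w.im - w₁.im| ≤ dist w w₁ := by
      rw [hdist, ← Complex.sub_im]; exact Complex.abs_im_le_norm _
    have hεle1 : ε ≤ δ/2 := min_le_left _ _
    have hεle2 : ε ≤ r - |w₁.re - w₀.re| := le_trans (min_le_right _ _) (min_le_left _ _)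
    have hεle3 : ε ≤ r - |w₁.im - w₀.im| := le_trans (min_le_right _ _) (min_le_right _ _)
    have hwre : |w.re - w₀.re| ≤ r := by
      calc |w.re - w₀.re| ≤ |w.re - w₁.re| + |w₁.re - w₀.re| := abs_sub_le _ _ _
        _ ≤ r := by linarith
    have hwim : |w.im - w₀.im| ≤ r := by
      calc |w.im - w₀.im| ≤ |w.im - w₁.im| + |w₁.im - w₀.im| := abs_sub_le _ _ _
        _ ≤ r := by linarith
    have heq := claim1 w₁ w h1re.le h1im.le hwre hwim
    have hbet : ∀ p q s : ℝ, s ∈ Set.uIoc p q → |s - p| ≤ |q - p| := by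
      intro p q s hs
      rcases Set.mem_uIoc.1 hs with ⟨hs1, hs2⟩ | ⟨hs1, hs2⟩
      · rw [abs_le]; constructor
        · linarith [abs_nonneg (q - p)]
        · linarith [le_abs_self (q - p)]
      · rw [abs_le]; constructor
        · linarith [neg_abs_le (q - p)]
        · linarith [abs_nonneg (q - p)]
    -- decompose
    have e1 : (∫ t : ℝ in w₁.re..w.re, (G (t + w₁.im * I) - G w₁)) =
        (∫ t : ℝ in w₁.re..w.re, G (t + w₁.im * I)) - (w.re - w₁.re) • G w₁ := by
      rw [intervalIntegral.integral_sub (hIntX w₁.im w₁.re w.re h1im.le)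
        intervalIntegrable_const, intervalIntegral.integral_const]
    have e2 : (∫ s : ℝ in w₁.im..w.im, (G (w.re + s * I) - G w₁)) =
        (∫ s : ℝ in w₁.im..w.im, G (w.re + s * I)) - (w.im - w₁.im) • G w₁ := by
      rw [intervalIntegral.integral_sub (hIntY w.re w₁.im w.im hwre h1im.le hwim)
        intervalIntegrable_const, intervalIntegral.integral_const]
    have hdecomp : w - w₁ = ((w.re : ℂ) - (w₁.re : ℂ)) + ((w.im : ℂ) - (w₁.im : ℂ)) * I := by
      simp [Complex.ext_iff]
    have key : F w - F w₁ - (w - w₁) • G w₁ =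
        (∫ t : ℝ in w₁.re..w.re, (G (t + w₁.im * I) - G w₁)) +
        I * (∫ s : ℝ in w₁.im..w.im, (G (w.re + s * I) - G w₁)) := by
      rw [e1, e2]
      simp only [smul_eq_mul, Complex.real_smul]
      push_cast
      linear_combination heq - G w₁ * hdecomp
    rw [key]
    -- bounds
    have bA : ‖∫ t : ℝ in w₁.re..w.re, (G (t + w₁.im * I) - G w₁)‖ ≤ (c/2) * |w.re - w₁.re| := by
      have := intervalIntegral.norm_integral_le_of_norm_le_const (C := c/2)
        (f := fun t : ℝ => G (t + w₁.im * I) - G w₁) (a := w₁.re) (b := w.re) ?_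
      · linarith [this]
      intro t ht
      have hptdist : dist ((t : ℂ) + (w₁.im : ℂ) * I) w₁ = |t - w₁.re| := by
        rw [Complex.dist_eq]
        have : (t : ℂ) + (w₁.im : ℂ) * I - w₁ = ((t - w₁.re : ℝ) : ℂ) := by
          simp [Complex.ext_iff]
        rw [this, Complex.norm_real, Real.norm_eq_abs]
      have hlt : dist ((t : ℂ) + (w₁.im : ℂ) * I) w₁ < δ := by
        rw [hptdist]
        calc |t - w₁.re| ≤ |w.re - w₁.re| := hbet _ _ _ ht
          _ ≤ dist w w₁ := hre
          _ < ε := hw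
          _ ≤ δ/2 := hεle1
          _ < δ := by linarith
      have := hδ hlt
      rw [dist_eq_norm] at this
      exact this.le
    have bB : ‖∫ s : ℝ in w₁.im..w.im, (G (w.re + s * I) - G w₁)‖ ≤ (c/2) * |w.im - w₁.im| := by
      have := intervalIntegral.norm_integral_le_of_norm_le_const (C := c/2)
        (f := fun s : ℝ => G (w.re + s * I) - G w₁) (a := w₁.im) (b := w.im) ?_
      · linarith [this]
      intro s hs
      have hptdist : dist ((w.re : ℂ) + (s : ℂ) * I) w₁ ≤ |w.re - w₁.re| + |s - w₁.im| := by
        rw [Complex.dist_eq]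
        have hpt : (w.re : ℂ) + (s : ℂ) * I - w₁ =
            ((w.re - w₁.re : ℝ) : ℂ) + ((s - w₁.im : ℝ) : ℂ) * I := by
          simp [Complex.ext_iff]
        rw [hpt]
        calc ‖((w.re - w₁.re : ℝ) : ℂ) + ((s - w₁.im : ℝ) : ℂ) * I‖ ≤
            ‖((w.re - w₁.re : ℝ) : ℂ)‖ + ‖((s - w₁.im : ℝ) : ℂ) * I‖ :=
              norm_add_le _ _
          _ = |w.re - w₁.re| + |s - w₁.im| := by
              rw [norm_mul, Complex.norm_I, mul_one, Complex.norm_real, Complex.norm_real,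
                Real.norm_eq_abs, Real.norm_eq_abs]
      have hlt : dist ((w.re : ℂ) + (s : ℂ) * I) w₁ < δ := by
        have h1 : |s - w₁.im| ≤ |w.im - w₁.im| := hbet _ _ _ hs
        have : dist ((w.re : ℂ) + (s : ℂ) * I) w₁ ≤ 2 * dist w w₁ := by
          calc dist ((w.re : ℂ) + (s : ℂ) * I) w₁ ≤ |w.re - w₁.re| + |s - w₁.im| := hptdist
            _ ≤ dist w w₁ + dist w w₁ := by linarith
            _ = 2 * dist w w₁ := by ring
        calc dist ((w.re : ℂ) + (s : ℂ) * I) w₁ ≤ 2 * dist w w₁ := this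
          _ < 2 * ε := by linarith
          _ ≤ δ := by linarith
      have := hδ hlt
      rw [dist_eq_norm] at this
      exact this.le
    calc ‖(∫ t : ℝ in w₁.re..w.re, (G (t + w₁.im * I) - G w₁)) +
          I * (∫ s : ℝ in w₁.im..w.im, (G (w.re + s * I) - G w₁))‖
        ≤ ‖∫ t : ℝ in w₁.re..w.re, (G (t + w₁.im * I) - G w₁)‖ +
          ‖I * (∫ s : ℝ in w₁.im..w.im, (G (w.re + s * I) - G w₁))‖ := norm_add_le _ _
      _ = ‖∫ t : ℝ in w₁.re..w.re, (G (t + w₁.im * I) - G w₁)‖ +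
          ‖∫ s : ℝ in w₁.im..w.im, (G (w.re + s * I) - G w₁)‖ := by
            rw [norm_mul, Complex.norm_I, one_mul]
      _ ≤ (c/2) * |w.re - w₁.re| + (c/2) * |w.im - w₁.im| := add_le_add bA bB
      _ ≤ (c/2) * ‖w - w₁‖ + (c/2) * ‖w - w₁‖ := by
          have h1 : |w.re - w₁.re| ≤ ‖w - w₁‖ := by
            rw [← Complex.sub_re]; exact Complex.abs_re_le_norm _
          have h2 : |w.im - w₁.im| ≤ ‖w - w₁‖ := by
            rw [← Complex.sub_im]; exact Complex.abs_im_le_norm _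
          have := hc.le
          gcongr
      _ = c * ‖w - w₁‖ := by ring
  -- conclude
  set Q : Set ℂ := Ioo (w₀.re - r) (w₀.re + r) ×ℂ Ioo (w₀.im - r) (w₀.im + r) with hQdef
  have hQopen : IsOpen Q := IsOpen.reProdIm isOpen_Ioo isOpen_Ioo
  have hQmem : ∀ w : ℂ, w ∈ Q → |w.re - w₀.re| < r ∧ |w.im - w₀.im| < r := by
    intro w hw
    rcases mem_reProdIm.1 hw with ⟨h1, h2⟩
    constructor <;> rw [abs_sub_lt_iff] <;> constructor
    · linarith [h1.2]
    · linarith [h1.1]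
    · linarith [h2.2]
    · linarith [h2.1]
  have hw₀Q : w₀ ∈ Q := mem_reProdIm.2 ⟨by constructor <;> linarith, by constructor <;> linarith⟩
  have hFdiff : DifferentiableOn ℂ F Q := fun w hw =>
    ((claim2 w (hQmem w hw).1 (hQmem w hw).2).differentiableAt).differentiableWithinAt
  have hFan : AnalyticOnNhd ℂ F Q := hFdiff.analyticOnNhd hQopen
  have hder : AnalyticAt ℂ (deriv F) w₀ := hFan.deriv w₀ hw₀Q
  have hev : deriv F =ᶠ[nhds w₀] G := by
    filter_upwards [hQopen.mem_nhds hw₀Q] with w hw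
    exact (claim2 w (hQmem w hw).1 (hQmem w hw).2).deriv
  exact ((hder.congr hev).differentiableAt)

lemma strip_zero {g : ℂ → ℂ} {h : ℝ} (hh : 0 < h)
    (Hc : ContinuousOn g (Complex.im ⁻¹' Icc 0 h))
    (Hd : ∀ v : ℂ, v.im ∈ Ioo 0 h → DifferentiableAt ℂ g v)
    (h0 : ∀ t : ℝ, g t = 0) :
    ∀ w : ℂ, w.im ∈ Icc 0 h → g w = 0 := by
  set G : ℂ → ℂ := fun w => if 0 ≤ w.im then g w else (starRingEnd ℂ) (g ((starRingEnd ℂ) w))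
    with hGdef
  -- continuity of G on the doubled strip
  have hupper_nhds : ∀ v : ℂ, 0 < v.im → v.im < h → ContinuousAt g v := by
    intro v h1 h2
    refine Hc.continuousAt ?_
    refine mem_nhds_iff.2 ⟨Complex.im ⁻¹' Ioo 0 h, ?_, isOpen_Ioo.preimage continuous_im, ⟨h1, h2⟩⟩
    exact fun u hu => ⟨hu.1.le, hu.2.le⟩
  have HcG : ∀ v : ℂ, v.im ∈ Ioo (-h) h → ContinuousWithinAt G (Complex.im ⁻¹' Ioo (-h) h) v := by
    intro v hv
    rcases lt_trichotomy v.im 0 with hneg | hzero | hpos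
    · -- lower part
      have hca : ContinuousAt (fun w => (starRingEnd ℂ) (g ((starRingEnd ℂ) w))) v := by
        have : ContinuousAt g ((starRingEnd ℂ) v) := by
          refine hupper_nhds _ ?_ ?_ <;> simp [Complex.conj_im]
          · linarith
          · linarith [hv.1]
        exact (Complex.continuous_conj.continuousAt).comp
          (this.comp (Complex.continuous_conj.continuousAt))
      have hev : G =ᶠ[nhds v] (fun w => (starRingEnd ℂ) (g ((starRingEnd ℂ) w))) := by
        filter_upwards [(isOpen_Iio.preimage Complex.continuous_im).mem_nhds
          (show v ∈ Complex.im ⁻¹' Iio 0 from hneg)] with u hu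
        simp only [hGdef]
        rw [if_neg (not_le.2 hu)]
      exact (hca.congr hev.symm).continuousWithinAt
    · -- on the line
      have hgv : G v = 0 := by
        have hv0 : ((v.re : ℝ) : ℂ) = v := by
          apply Complex.ext <;> simp [hzero.symm]
        simp only [hGdef]
        rw [if_pos (le_of_eq hzero.symm), ← hv0, h0]
      rw [ContinuousWithinAt, hgv]
      rw [Metric.tendsto_nhdsWithin_nhds]
      intro ε hε
      have hcw : ContinuousWithinAt g (Complex.im ⁻¹' Icc 0 h) v := by
        refine Hc v ?_
        rw [mem_preimage, hzero]
        exact ⟨le_rfl, hh.le⟩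
      rw [ContinuousWithinAt] at hcw
      have hgv' : g v = 0 := by
        have hv0 : ((v.re : ℝ) : ℂ) = v := by apply Complex.ext <;> simp [hzero.symm]
        rw [← hv0, h0]
      rw [hgv'] at hcw
      rcases Metric.tendsto_nhdsWithin_nhds.1 hcw ε hε with ⟨δ, hδpos, hδ⟩
      refine ⟨δ, hδpos, ?_⟩
      intro u hu hud
      by_cases hcase : 0 ≤ u.im
      · have : u ∈ Complex.im ⁻¹' Icc 0 h := ⟨hcase, hu.2.le⟩
        have := hδ this hud
        simpa only [hGdef, if_pos hcase] using this
      · have hmem : (starRingEnd ℂ) u ∈ Complex.im ⁻¹' Icc 0 h := by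
          simp only [mem_preimage, Complex.conj_im, mem_Icc]
          constructor
          · linarith [not_le.1 hcase]
          · linarith [hu.1]
        have hdist : dist ((starRingEnd ℂ) u) v < δ := by
          have hvconj : (starRingEnd ℂ) v = v := Complex.conj_eq_iff_im.2 hzero
          calc dist ((starRingEnd ℂ) u) v = dist ((starRingEnd ℂ) u) ((starRingEnd ℂ) v) := by
                rw [hvconj]
            _ = dist u v := by
                rw [Complex.dist_eq, Complex.dist_eq, ← map_sub, Complex.norm_conj]
            _ < δ := hud
        have := hδ hmem hdist
        have hnorm : dist (G u) 0 = dist (g ((starRingEnd ℂ) u)) 0 := by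
          simp only [hGdef, if_neg hcase, dist_zero_right]
          rw [RCLike.norm_conj]
        rw [hnorm]
        exact this
    · -- upper part
      have hca : ContinuousAt g v := hupper_nhds v hpos hv.2
      have hev : G =ᶠ[nhds v] g := by
        filter_upwards [(isOpen_Ioi.preimage Complex.continuous_im).mem_nhds
          (show v ∈ Complex.im ⁻¹' Ioi 0 from hpos)] with u hu
        simp only [hGdef]
        rw [if_pos (le_of_lt hu)]
      exact (hca.congr hev.symm).continuousWithinAt
  -- differentiability of G off the line
  have HdG : ∀ v : ℂ, v.im ∈ Ioo (-h) h → v.im ≠ 0 → DifferentiableAt ℂ G v := by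
    intro v hv hne
    rcases hne.lt_or_gt with hneg | hpos
    · have hdiff : DifferentiableAt ℂ (fun w => (starRingEnd ℂ) (g ((starRingEnd ℂ) w))) v := by
        apply conj_conj_diff
        apply Hd
        simp only [Complex.conj_im, mem_Ioo]
        constructor
        · linarith
        · linarith [hv.1]
      have hev : (fun w => (starRingEnd ℂ) (g ((starRingEnd ℂ) w))) =ᶠ[nhds v] G := by
        filter_upwards [(isOpen_Iio.preimage Complex.continuous_im).mem_nhds
          (show v ∈ Complex.im ⁻¹' Iio 0 from hneg)] with u hu
        simp only [hGdef]
        rw [if_neg (not_le.2 hu)]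
      exact (hev.differentiableAt_iff).1 hdiff
    · have hdiff : DifferentiableAt ℂ g v := Hd v ⟨hpos, hv.2⟩
      have hev : g =ᶠ[nhds v] G := by
        filter_upwards [(isOpen_Ioi.preimage Complex.continuous_im).mem_nhds
          (show v ∈ Complex.im ⁻¹' Ioi 0 from hpos)] with u hu
        simp only [hGdef]
        rw [if_pos (le_of_lt hu)]
      exact (hev.differentiableAt_iff).1 hdiff
  -- G is differentiable everywhere on the doubled strip
  have HdG' : ∀ v : ℂ, v.im ∈ Ioo (-h) h → DifferentiableAt ℂ G v :=
    primitive_diff (neg_neg_iff_pos.2 hh) hh (fun v hv => HcG v hv) HdG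
  -- identity theorem
  have han : AnalyticOnNhd ℂ G (Complex.im ⁻¹' Ioo (-h) h) := by
    apply DifferentiableOn.analyticOnNhd
    · exact fun v hv => (HdG' v hv).differentiableWithinAt
    · exact isOpen_Ioo.preimage Complex.continuous_im
  have hpre : IsPreconnected (Complex.im ⁻¹' Ioo (-h) h) := by
    apply Convex.isPreconnected
    exact (convex_Ioo _ _).linear_preimage Complex.imLm
  have h0mem : (0 : ℂ) ∈ Complex.im ⁻¹' Ioo (-h) h := by
    simp only [mem_preimage, Complex.zero_im, mem_Ioo]
    constructor <;> linarith
  have hfreq : ∃ᶠ v in nhdsWithin (0 : ℂ) {(0 : ℂ)}ᶜ, G v = 0 := by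
    rw [Filter.frequently_iff]
    intro U hU
    rcases Metric.mem_nhdsWithin_iff.1 hU with ⟨ε, hεpos, hsub⟩
    refine ⟨((ε/2 : ℝ) : ℂ), hsub ⟨?_, ?_⟩, ?_⟩
    · simp only [Metric.mem_ball, Complex.dist_eq, sub_zero, Complex.norm_real, Real.norm_eq_abs]
      rw [abs_of_pos (by linarith)]
      linarith
    · simp only [mem_compl_iff, mem_singleton_iff, Complex.ofReal_eq_zero]
      intro hcon
      linarith
    · simp only [hGdef, Complex.ofReal_im, if_pos le_rfl]
      exact h0 (ε/2)
  have hzero : EqOn G 0 (Complex.im ⁻¹' Ioo (-h) h) :=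
    han.eqOn_zero_of_preconnected_of_frequently_eq_zero hpre h0mem hfreq
  -- conclude
  intro w hw
  rcases lt_or_eq_of_le hw.2 with hlt | heq
  · have : G w = 0 := hzero (by exact ⟨by linarith [hw.1], hlt⟩)
    simpa only [hGdef, if_pos hw.1] using this
  · -- top line: continuity argument
    have hmemcl : w ∈ closure (Complex.im ⁻¹' Ico 0 h) := by
      rw [Complex.closure_preimage_im, closure_Ico (by linarith : (0:ℝ) ≠ h)]
      exact hw
    have hne : (nhdsWithin w (Complex.im ⁻¹' Ico 0 h)).NeBot :=
      mem_closure_iff_nhdsWithin_neBot.1 hmemcl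
    have ht1 : Filter.Tendsto g (nhdsWithin w (Complex.im ⁻¹' Ico 0 h)) (nhds (g w)) := by
      apply (Hc w hw).tendsto.mono_left
      apply nhdsWithin_mono
      exact fun u hu => ⟨hu.1, hu.2.le⟩
    have ht2 : Filter.Tendsto g (nhdsWithin w (Complex.im ⁻¹' Ico 0 h)) (nhds 0) := by
      apply Filter.Tendsto.congr' _ tendsto_const_nhds
      filter_upwards [self_mem_nhdsWithin] with u hu
      have : G u = 0 := hzero ⟨by linarith [hu.1], hu.2⟩
      simpa only [hGdef, if_pos hu.1, eq_comm] using this.symm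
    exact tendsto_nhds_unique ht1 ht2

lemma strip_zero_top {g : ℂ → ℂ} {h : ℝ} (hh : 0 < h)
    (Hc : ContinuousOn g (Complex.im ⁻¹' Icc 0 h))
    (Hd : ∀ v : ℂ, v.im ∈ Ioo 0 h → DifferentiableAt ℂ g v)
    (h0 : ∀ t : ℝ, g (t + h * I) = 0) :
    ∀ w : ℂ, w.im ∈ Icc 0 h → g w = 0 := by
  set g₂ : ℂ → ℂ := fun v => (starRingEnd ℂ) (g ((starRingEnd ℂ) v + h * I)) with hg₂def
  have hmaps : ∀ v : ℂ, v.im ∈ Icc 0 h → ((starRingEnd ℂ) v + h * I).im ∈ Icc 0 h := by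
    intro v hv
    simp only [Complex.add_im, Complex.conj_im, Complex.mul_im, Complex.ofReal_re,
      Complex.ofReal_im, Complex.I_im, Complex.I_re]
    constructor <;> [linarith [hv.2]; linarith [hv.1]]
  have hz : ∀ w : ℂ, w.im ∈ Icc 0 h → g₂ w = 0 := by
    apply strip_zero hh
    · refine Complex.continuous_conj.comp_continuousOn ?_
      refine Hc.comp ((Complex.continuous_conj.add continuous_const).continuousOn) ?_
      intro v hv
      exact hmaps v hv
    · intro v hv
      have : (fun u : ℂ => g (u + h * I)) = g ∘ (fun u : ℂ => u + (h : ℂ) * I) := rfl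
      have hdiff : DifferentiableAt ℂ (fun u : ℂ => g (u + h * I)) ((starRingEnd ℂ) v) := by
        apply DifferentiableAt.comp
        · apply Hd
          simp only [Complex.add_im, Complex.conj_im, Complex.mul_im, Complex.ofReal_re,
            Complex.ofReal_im, Complex.I_im, Complex.I_re]
          constructor <;> [linarith [hv.2]; linarith [hv.1]]
        · exact (differentiable_id.add_const _).differentiableAt
      exact conj_conj_diff hdiff
    · intro t
      simp only [hg₂def]
      rw [Complex.conj_ofReal]
      rw [h0 t, map_zero]
  intro w hw
  have hmem : ((starRingEnd ℂ) w + h * I).im ∈ Icc 0 h := hmaps w hw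
  have := hz ((starRingEnd ℂ) w + h * I) hmem
  simp only [hg₂def] at this
  have harg : (starRingEnd ℂ) ((starRingEnd ℂ) w + h * I) + h * I = w := by
    apply Complex.ext <;> simp
  rw [harg] at this
  exact (star_eq_zero (R := ℂ)).1 this

section EValued
variable {E : Type*} [NormedAddCommGroup E] [NormedSpace ℂ E]

lemma interior_strip (m : ℝ) :
    interior {w : ℂ | w.im ∈ Set.uIcc 0 m} = Complex.im ⁻¹' Ioo (min 0 m) (max 0 m) := by
  have : {w : ℂ | w.im ∈ Set.uIcc 0 m} = Complex.im ⁻¹' Set.uIcc 0 m := rfl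
  rw [this, ← Complex.isOpenMap_im.preimage_interior_eq_interior_preimage Complex.continuous_im]
  congr 1
  rw [Set.uIcc, interior_Icc]

/-- bottom-line uniqueness, `E`-valued, for the strip `uIcc 0 m`. -/
lemma strip_zero_bot_E {f : ℂ → E} {m : ℝ}
    (Hc : ContinuousOn f {w : ℂ | w.im ∈ Set.uIcc 0 m})
    (Hd : DifferentiableOn ℂ f (interior {w : ℂ | w.im ∈ Set.uIcc 0 m}))
    (h0 : ∀ t : ℝ, f t = 0) :
    ∀ w : ℂ, w.im ∈ Set.uIcc 0 m → f w = 0 := by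
  intro w hw
  have hopen : IsOpen (interior {w : ℂ | w.im ∈ Set.uIcc 0 m}) := isOpen_interior
  apply NormedSpace.eq_zero_of_forall_dual_eq_zero ℂ
  intro φ
  set g : ℂ → ℂ := fun v => φ (f v) with hgdef
  have Hcg : ContinuousOn g {w : ℂ | w.im ∈ Set.uIcc 0 m} := φ.continuous.comp_continuousOn Hc
  have Hdg : ∀ v : ℂ, v.im ∈ Ioo (min 0 m) (max 0 m) → DifferentiableAt ℂ g v := by
    intro v hv
    have hv' : v ∈ interior {w : ℂ | w.im ∈ Set.uIcc 0 m} := by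
      rw [interior_strip]; exact hv
    have := (Hd.differentiableAt (hopen.mem_nhds hv'))
    exact (φ.differentiableAt).comp v this
  have h0g : ∀ t : ℝ, g t = 0 := fun t => by rw [hgdef]; simp [h0 t]
  show g w = 0
  rcases lt_trichotomy m 0 with hm | hm | hm
  · -- m < 0 : strip below, reflect
    set g₁ : ℂ → ℂ := fun v => (starRingEnd ℂ) (g ((starRingEnd ℂ) v)) with hg₁def
    have hz : ∀ v : ℂ, v.im ∈ Icc 0 (-m) → g₁ v = 0 := by
      apply strip_zero (by linarith)
      · refine Complex.continuous_conj.comp_continuousOn ?_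
        refine Hcg.comp Complex.continuous_conj.continuousOn ?_
        intro v hv
        simp only [mem_preimage, Complex.conj_im] at hv ⊢
        rw [Set.uIcc_of_ge hm.le]
        rcases hv with ⟨h1, h2⟩
        constructor
        · show m ≤ -v.im
          linarith
        · show -v.im ≤ 0
          linarith
      · intro v hv
        apply conj_conj_diff
        apply Hdg
        simp only [Complex.conj_im, mem_Ioo, min_eq_right hm.le, max_eq_left hm.le]
        constructor <;> [linarith [hv.2]; linarith [hv.1]]
      · intro t
        rw [hg₁def]
        simp only []
        rw [Complex.conj_ofReal, h0g t, map_zero]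
    have hwmem : ((starRingEnd ℂ) w).im ∈ Icc 0 (-m) := by
      rw [Set.uIcc_of_ge hm.le] at hw
      simp only [Complex.conj_im]
      constructor <;> [linarith [hw.2]; linarith [hw.1]]
    have := hz _ hwmem
    rw [hg₁def] at this
    simp only [Complex.conj_conj] at this
    exact (star_eq_zero (R := ℂ)).1 this
  · -- m = 0
    subst hm
    simp only [Set.uIcc_self, mem_singleton_iff] at hw
    have : ((w.re : ℝ) : ℂ) = w := by apply Complex.ext <;> simp [hw.symm]
    rw [← this]
    exact h0g w.re
  · -- m > 0
    apply strip_zero hm (by rwa [show Complex.im ⁻¹' Icc 0 m = {w : ℂ | w.im ∈ Set.uIcc 0 m} from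
        by rw [Set.uIcc_of_le hm.le]; rfl]) ?_ h0g w
    · rwa [Set.uIcc_of_le hm.le] at hw
    · intro v hv
      apply Hdg
      rwa [min_eq_left hm.le, max_eq_right hm.le]

/-- top-line uniqueness, `E`-valued, for the strip `uIcc 0 m` (vanishing on `im = m`). -/
lemma strip_zero_top_E {f : ℂ → E} {m : ℝ}
    (Hc : ContinuousOn f {w : ℂ | w.im ∈ Set.uIcc 0 m})
    (Hd : DifferentiableOn ℂ f (interior {w : ℂ | w.im ∈ Set.uIcc 0 m}))
    (h0 : ∀ t : ℝ, f (t + m * I) = 0) :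
    ∀ w : ℂ, w.im ∈ Set.uIcc 0 m → f w = 0 := by
  intro w hw
  have hopen : IsOpen (interior {w : ℂ | w.im ∈ Set.uIcc 0 m}) := isOpen_interior
  apply NormedSpace.eq_zero_of_forall_dual_eq_zero ℂ
  intro φ
  set g : ℂ → ℂ := fun v => φ (f v) with hgdef
  have Hcg : ContinuousOn g {w : ℂ | w.im ∈ Set.uIcc 0 m} := φ.continuous.comp_continuousOn Hc
  have Hdg : ∀ v : ℂ, v.im ∈ Ioo (min 0 m) (max 0 m) → DifferentiableAt ℂ g v := by
    intro v hv
    have hv' : v ∈ interior {w : ℂ | w.im ∈ Set.uIcc 0 m} := by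
      rw [interior_strip]; exact hv
    exact (φ.differentiableAt).comp v (Hd.differentiableAt (hopen.mem_nhds hv'))
  have h0g : ∀ t : ℝ, g (t + m * I) = 0 := fun t => by rw [hgdef]; simp [h0 t]
  show g w = 0
  rcases lt_trichotomy m 0 with hm | hm | hm
  · -- m < 0 : reflect, top line goes to line -m of reflected strip
    set g₁ : ℂ → ℂ := fun v => (starRingEnd ℂ) (g ((starRingEnd ℂ) v)) with hg₁def
    have hz : ∀ v : ℂ, v.im ∈ Icc 0 (-m) → g₁ v = 0 := by
      apply strip_zero_top (by linarith : (0:ℝ) < -m)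
      · refine Complex.continuous_conj.comp_continuousOn ?_
        refine Hcg.comp Complex.continuous_conj.continuousOn ?_
        intro v hv
        simp only [mem_preimage] at hv
        rcases hv with ⟨h1, h2⟩
        rw [Set.uIcc_of_ge hm.le]
        constructor
        · show m ≤ ((starRingEnd ℂ) v).im
          rw [Complex.conj_im]
          linarith
        · show ((starRingEnd ℂ) v).im ≤ 0
          rw [Complex.conj_im]
          linarith
      · intro v hv
        apply conj_conj_diff
        apply Hdg
        simp only [Complex.conj_im, mem_Ioo, min_eq_right hm.le, max_eq_left hm.le]
        constructor <;> [linarith [hv.2]; linarith [hv.1]]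
      · intro t
        rw [hg₁def]
        simp only []
        have : (starRingEnd ℂ) ((t : ℂ) + ((-m : ℝ) : ℂ) * I) = (t : ℂ) + m * I := by
          apply Complex.ext <;> simp
        rw [this, h0g t, map_zero]
    have hwmem : ((starRingEnd ℂ) w).im ∈ Icc 0 (-m) := by
      rw [Set.uIcc_of_ge hm.le] at hw
      simp only [Complex.conj_im]
      constructor <;> [linarith [hw.2]; linarith [hw.1]]
    have := hz _ hwmem
    rw [hg₁def] at this
    simp only [Complex.conj_conj] at this
    exact (star_eq_zero (R := ℂ)).1 this
  · -- m = 0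
    subst hm
    simp only [Set.uIcc_self, mem_singleton_iff] at hw
    have h1 : ((w.re : ℝ) : ℂ) + ((0 : ℝ) : ℂ) * I = w := by
      apply Complex.ext <;> simp [hw.symm]
    have := h0g w.re
    rwa [h1] at this
  · -- m > 0
    apply strip_zero_top hm (by rwa [show Complex.im ⁻¹' Icc 0 m = {w : ℂ | w.im ∈ Set.uIcc 0 m}
        from by rw [Set.uIcc_of_le hm.le]; rfl]) ?_ h0g w
    · rwa [Set.uIcc_of_le hm.le] at hw
    · intro v hv
      apply Hdg
      rwa [min_eq_left hm.le, max_eq_right hm.le]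

end EValued

section EValued2
variable {E : Type*} [NormedAddCommGroup E] [NormedSpace ℂ E]

lemma HasContVal.smul {α : ℝ → E →L[ℂ] E} {z : ℂ} {a b : E} (r : ℂ)
    (h : HasContVal α z a b) : HasContVal α z (r • a) (r • b) := by
  obtain ⟨f, hc, hd, hreal, hz⟩ := h
  refine ⟨fun w => r • f w, hc.const_smul r, hd.const_smul r, fun t => ?_, ?_⟩
  · show r • f ↑t = (α t) (r • a)
    rw [hreal t, ContinuousLinearMap.map_smul]
  · show r • f z = r • b
    rw [hz]

/-- injectivity of `α_z`. -/
lemma hasContVal_zero {α : ℝ → E →L[ℂ] E} (hα : IsOneParamRep α) {z : ℂ} {x : E}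
    (h : HasContVal α z x 0) : x = 0 := by
  obtain ⟨f, Hc, Hd, hreal, hz⟩ := h
  have hinv : ∀ (t : ℝ) (v : E), α t v = 0 → v = 0 := by
    intro t v hv
    have h1 : α (-t + t) = (α (-t)).comp (α t) := hα.map_add (-t) t
    rw [neg_add_cancel, hα.map_zero] at h1
    have : v = α (-t) (α t v) := by
      conv_lhs => rw [show v = ContinuousLinearMap.id ℂ E v from rfl, h1]
      rfl
    rw [this, hv, map_zero]
  by_cases hzim : z.im = 0
  · -- degenerate strip
    have hzz : ((z.re : ℝ) : ℂ) = z := by apply Complex.ext <;> simp [hzim.symm]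
    have : α z.re x = 0 := by rw [← hreal z.re, hzz, hz]
    exact hinv z.re x this
  · -- covariance: f (z + s) = 0 for all real s
    have hint : interior (hStrip z) = Complex.im ⁻¹' Ioo (min 0 z.im) (max 0 z.im) :=
      interior_strip z.im
    have hcov : ∀ s : ℝ, ∀ w : ℂ, w.im ∈ Set.uIcc 0 z.im → f (w + s) - α s (f w) = 0 := by
      intro s
      apply strip_zero_bot_E (f := fun w => f (w + (s : ℂ)) - α s (f w))
      · apply ContinuousOn.sub
        · refine Hc.comp ((continuous_id.add continuous_const).continuousOn) ?_
          intro w hw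
          simpa [hStrip] using hw
        · exact (α s).continuous.comp_continuousOn Hc
      · apply DifferentiableOn.sub
        · refine Hd.comp ((differentiable_id.add_const _).differentiableOn) ?_
          intro w hw
          rw [interior_strip] at hw
          show w + (s:ℂ) ∈ interior (hStrip z)
          rw [hint]
          simpa using hw
        · exact ((α s).differentiable.comp_differentiableOn Hd)
      · intro t
        have h1 : ((t : ℂ) + (s : ℂ)) = ((t + s : ℝ) : ℂ) := by push_cast; ring
        rw [h1, hreal (t + s), hreal t]
        have := hα.map_add s t
        rw [add_comm t s, this]
        simp [sub_eq_zero]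
    have htop : ∀ t : ℝ, f (t + z.im * I) = 0 := by
      intro t
      have hs := hcov (t - z.re) z (by simp [Set.right_mem_uIcc])
      rw [hz, map_zero, sub_zero] at hs
      have harg : z + ((t - z.re : ℝ) : ℂ) = (t : ℂ) + (z.im : ℂ) * I := by
        apply Complex.ext <;> simp
      rwa [harg] at hs
    have hzero := strip_zero_top_E (f := f) (m := z.im) Hc Hd htop
    have h0 : f 0 = 0 := by
      apply hzero
      simp [Set.left_mem_uIcc]
    have : f ((0 : ℝ) : ℂ) = α 0 x := hreal 0
    rw [show (((0:ℝ)):ℂ) = (0:ℂ) from by norm_num, h0, hα.map_zero] at this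
    exact this.symm

end EValued2

end AuxUniqueness

/-- If `C` is a core for `α_z` and `x ∈ D(α_z)`, then there is a sequence `(xₙ)` in `C` with
`‖xₙ‖ ≤ ‖x‖`, `‖α_z xₙ‖ ≤ ‖α_z x‖`, `xₙ → x` and `α_z xₙ → α_z x`. -/
theorem core_norm_controlled_approx
    {E : Type*} [NormedAddCommGroup E] [NormedSpace ℂ E] [CompleteSpace E]
    {α : ℝ → E →L[ℂ] E} (hα : IsOneParamRep α) (z : ℂ) (C : Submodule ℂ E)
    (hCdom : ∀ c ∈ C, ∃ b, HasContVal α z c b)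
    (hCcore : closure {p : E × E | p.1 ∈ C ∧ HasContVal α z p.1 p.2}
      = {p : E × E | HasContVal α z p.1 p.2})
    (x y : E) (hx : HasContVal α z x y) :
    ∃ xs ys : ℕ → E,
      (∀ n, xs n ∈ C ∧ HasContVal α z (xs n) (ys n) ∧ ‖xs n‖ ≤ ‖x‖ ∧ ‖ys n‖ ≤ ‖y‖) ∧
      Tendsto xs atTop (nhds x) ∧ Tendsto ys atTop (nhds y) := by
  by_cases hx0 : x = 0
  · subst hx0
    exact ⟨fun _ => 0, fun _ => y,
      fun n => ⟨C.zero_mem, hx, by simp, le_rfl⟩,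
      tendsto_const_nhds, tendsto_const_nhds⟩
  have hy0 : y ≠ 0 := by
    intro hy
    exact hx0 (hasContVal_zero hα (hy ▸ hx))
  have hxn : (0:ℝ) < ‖x‖ := norm_pos_iff.2 hx0
  have hyn : (0:ℝ) < ‖y‖ := norm_pos_iff.2 hy0
  -- approximating sequence from the core
  have hmem : (x, y) ∈ closure {p : E × E | p.1 ∈ C ∧ HasContVal α z p.1 p.2} := by
    rw [hCcore]; exact hx
  rcases mem_closure_iff_seq_limit.1 hmem with ⟨p, hpS, hplim⟩
  set a : ℕ → E := fun n => (p n).1 with hadef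
  set b : ℕ → E := fun n => (p n).2 with hbdef
  have ha : Tendsto a atTop (nhds x) := (continuous_fst.tendsto (x, y)).comp hplim
  have hb : Tendsto b atTop (nhds y) := (continuous_snd.tendsto (x, y)).comp hplim
  set r : ℕ → ℝ := fun n => min 1 (min (‖x‖ / ‖a n‖) (‖y‖ / ‖b n‖)) with hrdef
  have hr0 : ∀ n, 0 ≤ r n := fun n =>
    le_min zero_le_one (le_min (div_nonneg hxn.le (norm_nonneg _))
      (div_nonneg hyn.le (norm_nonneg _)))
  refine ⟨fun n => ((r n : ℂ)) • a n, fun n => ((r n : ℂ)) • b n, fun n => ?_, ?_, ?_⟩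
  · refine ⟨C.smul_mem _ (hpS n).1, HasContVal.smul _ (hpS n).2, ?_, ?_⟩
    · rw [norm_smul, Complex.norm_real, Real.norm_eq_abs, _root_.abs_of_nonneg (hr0 n)]
      rcases eq_or_ne ‖a n‖ 0 with h | h
      · rw [h, mul_zero]; exact hxn.le
      · have hpos : 0 < ‖a n‖ := (norm_nonneg _).lt_of_ne' h
        have : r n ≤ ‖x‖ / ‖a n‖ := le_trans (min_le_right _ _) (min_le_left _ _)
        calc r n * ‖a n‖ ≤ (‖x‖ / ‖a n‖) * ‖a n‖ := by gcongr
          _ = ‖x‖ := div_mul_cancel₀ _ h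
    · rw [norm_smul, Complex.norm_real, Real.norm_eq_abs, _root_.abs_of_nonneg (hr0 n)]
      rcases eq_or_ne ‖b n‖ 0 with h | h
      · rw [h, mul_zero]; exact hyn.le
      · have : r n ≤ ‖y‖ / ‖b n‖ := le_trans (min_le_right _ _) (min_le_right _ _)
        calc r n * ‖b n‖ ≤ (‖y‖ / ‖b n‖) * ‖b n‖ := by gcongr
          _ = ‖y‖ := div_mul_cancel₀ _ h
  · -- xs → x
    have hna : Tendsto (fun n => ‖a n‖) atTop (nhds ‖x‖) := (continuous_norm.tendsto x).comp ha
    have hnb : Tendsto (fun n => ‖b n‖) atTop (nhds ‖y‖) := (continuous_norm.tendsto y).comp hb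
    have hrlim : Tendsto r atTop (nhds 1) := by
      have h1 : Tendsto (fun n => ‖x‖ / ‖a n‖) atTop (nhds (‖x‖ / ‖x‖)) :=
        tendsto_const_nhds.div hna hxn.ne'
      have h2 : Tendsto (fun n => ‖y‖ / ‖b n‖) atTop (nhds (‖y‖ / ‖y‖)) :=
        tendsto_const_nhds.div hnb hyn.ne'
      rw [div_self hxn.ne'] at h1
      rw [div_self hyn.ne'] at h2
      have := (tendsto_const_nhds (x := (1:ℝ)) (f := atTop (α := ℕ))).min (h1.min h2)
      simpa using this
    have hrc : Tendsto (fun n => ((r n : ℝ) : ℂ)) atTop (nhds ((1:ℝ):ℂ)) :=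
      (Complex.continuous_ofReal.tendsto 1).comp hrlim
    have := hrc.smul ha
    simpa using this
  · have hnb : Tendsto (fun n => ‖b n‖) atTop (nhds ‖y‖) := (continuous_norm.tendsto y).comp hb
    have hna : Tendsto (fun n => ‖a n‖) atTop (nhds ‖x‖) := (continuous_norm.tendsto x).comp ha
    have hrlim : Tendsto r atTop (nhds 1) := by
      have h1 : Tendsto (fun n => ‖x‖ / ‖a n‖) atTop (nhds (‖x‖ / ‖x‖)) :=
        tendsto_const_nhds.div hna hxn.ne'
      have h2 : Tendsto (fun n => ‖y‖ / ‖b n‖) atTop (nhds (‖y‖ / ‖y‖)) :=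
        tendsto_const_nhds.div hnb hyn.ne'
      rw [div_self hxn.ne'] at h1
      rw [div_self hyn.ne'] at h2
      have := (tendsto_const_nhds (x := (1:ℝ)) (f := atTop (α := ℕ))).min (h1.min h2)
      simpa using this
    have hrc : Tendsto (fun n => ((r n : ℝ) : ℂ)) atTop (nhds ((1:ℝ):ℂ)) :=
      (Complex.continuous_ofReal.tendsto 1).comp hrlim
    have := hrc.smul hb
    simpa using this
end
end

section
/- Let u be a strongly continuous one-parameter group of unitaries on a Hilbert space H and z ∈ iℝ, z ≠ 0. Then the operator 1 + u_z has dense range in H. -/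
open Complex MeasureTheory Filter Topology Set

noncomputable section

set_option linter.unusedSectionVars false
set_option maxHeartbeats 1000000

section aux
variable {H : Type*} [NormedAddCommGroup H] [InnerProductSpace ℂ H] [CompleteSpace H]
  (u : ℝ → H →L[ℂ] H)

/-- Regularized vector family: entire extension of the orbit of the Gaussian smoothing of `a`. -/
def Freg (a : H) (ε : ℝ) (w : ℂ) : H :=
  (Real.sqrt Real.pi)⁻¹ • ∫ s : ℝ, Complex.exp (-(((s : ℂ) - w / ε) ^ 2)) • u (ε * s) a

variable {u}

lemma norm_orbit_le (hu : IsOneParamRep u) (a : H) (t : ℝ) : ‖u t a‖ ≤ ‖a‖ := by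
  calc ‖u t a‖ ≤ ‖u t‖ * ‖a‖ := (u t).le_opNorm a
  _ ≤ 1 * ‖a‖ := by gcongr; exact hu.norm_le t
  _ = ‖a‖ := one_mul _

lemma cont_orbit (hu : IsOneParamRep u) (a : H) (ε : ℝ) :
    Continuous fun s : ℝ => u (ε * s) a :=
  (hu.strong_cont a).comp (continuous_const.mul continuous_id)

/-- real part computation for the Gaussian factor -/
lemma re_neg_sq (s : ℝ) (c : ℂ) : (-(((s : ℂ) - c) ^ 2)).re = -((s - c.re) ^ 2) + c.im ^ 2 := by
  simp [pow_two, Complex.mul_re, Complex.sub_re, Complex.sub_im, Complex.ofReal_re,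
    Complex.ofReal_im]
  ring

lemma abs_gauss (s : ℝ) (c : ℂ) :
    ‖Complex.exp (-(((s : ℂ) - c) ^ 2))‖ = Real.exp (c.im ^ 2) * Real.exp (-((s - c.re) ^ 2)) := by
  rw [Complex.norm_exp, re_neg_sq, ← Real.exp_add]
  ring_nf

lemma gauss_integrable (c : ℝ) : Integrable (fun s : ℝ => Real.exp (-((s - c) ^ 2))) := by
  have h := integrable_exp_neg_mul_sq (b := 1) one_pos
  have := h.comp_sub_right c
  simpa using this

lemma gauss_integral (c : ℝ) : ∫ s : ℝ, Real.exp (-((s - c) ^ 2)) = Real.sqrt Real.pi := by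
  have : (fun s : ℝ => Real.exp (-((s - c) ^ 2))) = fun s => Real.exp (-1 * (s - c) ^ 2) := by
    funext s; ring_nf
  rw [this, MeasureTheory.integral_sub_right_eq_self (fun s : ℝ => Real.exp (-1 * s ^ 2)) c,
    integral_gaussian]
  norm_num

lemma integrand_integrable (hu : IsOneParamRep u) (a : H) (ε : ℝ) (c : ℂ) :
    Integrable (fun s : ℝ => Complex.exp (-(((s : ℂ) - c) ^ 2)) • u (ε * s) a) := by
  apply Integrable.mono' ((gauss_integrable c.re).const_mul (Real.exp (c.im ^ 2) * ‖a‖))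
  · exact ((Complex.continuous_exp.comp (by continuity)).smul (cont_orbit hu a ε)).aestronglyMeasurable
  · filter_upwards with s
    rw [norm_smul, abs_gauss]
    calc Real.exp (c.im ^ 2) * Real.exp (-((s - c.re) ^ 2)) * ‖u (ε * s) a‖
        ≤ Real.exp (c.im ^ 2) * Real.exp (-((s - c.re) ^ 2)) * ‖a‖ := by
          gcongr; exact norm_orbit_le hu a _
      _ = Real.exp (c.im ^ 2) * ‖a‖ * Real.exp (-((s - c.re) ^ 2)) := by ring



lemma Freg_norm_le (hu : IsOneParamRep u) (a : H) {ε : ℝ} (hε : 0 < ε) (w : ℂ) :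
    ‖Freg u a ε w‖ ≤ Real.exp ((w / ε).im ^ 2) * ‖a‖ := by
  have hπ : 0 < Real.sqrt Real.pi := Real.sqrt_pos.mpr Real.pi_pos
  have hnorm : ‖∫ s : ℝ, Complex.exp (-(((s : ℂ) - w / ε) ^ 2)) • u (ε * s) a‖
      ≤ ∫ s : ℝ, Real.exp ((w / ε).im ^ 2) * ‖a‖ * Real.exp (-((s - (w / ε).re) ^ 2)) := by
    apply MeasureTheory.norm_integral_le_of_norm_le
      (((gauss_integrable (w / ε).re).const_mul _))
    filter_upwards with s
    rw [norm_smul, abs_gauss]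
    calc Real.exp ((w / ε).im ^ 2) * Real.exp (-((s - (w / ε).re) ^ 2)) * ‖u (ε * s) a‖
        ≤ Real.exp ((w / ε).im ^ 2) * Real.exp (-((s - (w / ε).re) ^ 2)) * ‖a‖ := by
          gcongr; exact norm_orbit_le hu a _
      _ = Real.exp ((w / ε).im ^ 2) * ‖a‖ * Real.exp (-((s - (w / ε).re) ^ 2)) := by ring
  have hint : ∫ s : ℝ, Real.exp ((w / ε).im ^ 2) * ‖a‖ * Real.exp (-((s - (w / ε).re) ^ 2))
      = Real.exp ((w / ε).im ^ 2) * ‖a‖ * Real.sqrt Real.pi := by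
    rw [MeasureTheory.integral_const_mul, gauss_integral]
  rw [Freg, norm_smul, norm_inv, Real.norm_eq_abs, abs_of_pos hπ]
  calc (Real.sqrt Real.pi)⁻¹ * ‖∫ s : ℝ, Complex.exp (-(((s : ℂ) - w / ε) ^ 2)) • u (ε * s) a‖
      ≤ (Real.sqrt Real.pi)⁻¹ * (Real.exp ((w / ε).im ^ 2) * ‖a‖ * Real.sqrt Real.pi) := by
        gcongr; rw [← hint]; exact hnorm
    _ = Real.exp ((w / ε).im ^ 2) * ‖a‖ := by field_simp

lemma gauss_hasDerivAt (s : ℝ) (ε : ℝ) (w : ℂ) :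
    HasDerivAt (fun w : ℂ => Complex.exp (-(((s : ℂ) - w / ε) ^ 2)))
      (Complex.exp (-(((s : ℂ) - w / ε) ^ 2)) * (2 * ((s : ℂ) - w / ε) / ε)) w := by
  have h1 : HasDerivAt (fun w : ℂ => (s : ℂ) - w / ε) (-(1 / ε)) w := by
    simpa using ((hasDerivAt_id w).div_const (ε : ℂ)).const_sub (s : ℂ)
  have h2 : HasDerivAt (fun w : ℂ => -(((s : ℂ) - w / ε) ^ 2))
      (2 * ((s : ℂ) - w / ε) / ε) w := by
    have h3 := (h1.fun_pow 2).fun_neg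
    refine h3.congr_deriv ?_
    ring
  exact h2.cexp

lemma Freg_differentiable (hu : IsOneParamRep u) (a : H) {ε : ℝ} (hε : 0 < ε) :
    Differentiable ℂ (Freg u a ε) := by
  apply Differentiable.const_smul
  intro w₀
  set K : ℝ := (‖w₀‖ + 1) / ε with hK
  have hK0 : 0 ≤ K := by positivity
  have key := hasDerivAt_integral_of_dominated_loc_of_deriv_le (μ := volume)
    (F := fun (w : ℂ) (s : ℝ) => Complex.exp (-(((s : ℂ) - w / ε) ^ 2)) • u (ε * s) a)
    (F' := fun (w : ℂ) (s : ℝ) =>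
      (Complex.exp (-(((s : ℂ) - w / ε) ^ 2)) * (2 * ((s : ℂ) - w / ε) / ε)) • u (ε * s) a)
    (x₀ := w₀) (s := Metric.ball w₀ 1) (Metric.ball_mem_nhds w₀ one_pos)
    (bound := fun s : ℝ => 2 / ε * (|s| + K) * Real.exp (2 * K ^ 2) * Real.exp (-(2⁻¹ * s ^ 2)) * ‖a‖)
    ?meas ?int ?meas' ?bound ?bint ?diff
  · exact key.2.differentiableAt
  case meas =>
    filter_upwards with w
    exact ((Complex.continuous_exp.comp (by continuity)).smul
      (cont_orbit hu a ε)).aestronglyMeasurable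
  case int => exact integrand_integrable hu a ε (w₀ / ε)
  case meas' =>
    exact (((Complex.continuous_exp.comp (by continuity)).mul (by continuity)).smul
      (cont_orbit hu a ε)).aestronglyMeasurable
  case bound =>
    filter_upwards with s w hw
    have hwK : ‖w / ε‖ ≤ K := by
      rw [norm_div, Complex.norm_real, Real.norm_eq_abs, abs_of_pos hε, hK]
      gcongr
      calc ‖w‖ ≤ ‖w₀‖ + ‖w - w₀‖ := by
            simpa using norm_le_norm_add_norm_sub' w w₀
        _ ≤ ‖w₀‖ + 1 := by
            gcongr
            exact le_of_lt (by simpa [dist_eq_norm] using Metric.mem_ball.mp hw)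
    have hre : |(w / ε).re| ≤ K := (Complex.abs_re_le_norm _).trans hwK
    have him : |(w / ε).im| ≤ K := (Complex.abs_im_le_norm _).trans hwK
    rw [norm_smul, norm_mul, abs_gauss]
    have h5 : ‖2 * ((s : ℂ) - w / ε) / ε‖ ≤ 2 / ε * (|s| + K) := by
      rw [norm_div, norm_mul]
      simp only [Complex.norm_real, Real.norm_eq_abs, Complex.norm_two, abs_of_pos hε]
      rw [div_le_iff₀ hε, div_mul_eq_mul_div, div_mul_cancel₀ _ (ne_of_gt hε)]
      gcongr
      calc ‖(s : ℂ) - w / ε‖ ≤ ‖(s : ℂ)‖ + ‖w / ε‖ :=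
            norm_sub_le _ _
        _ ≤ |s| + K := by rw [Complex.norm_real, Real.norm_eq_abs]; gcongr
    have h6 : Real.exp ((w / ε).im ^ 2) * Real.exp (-((s - (w / ε).re) ^ 2))
        ≤ Real.exp (2 * K ^ 2) * Real.exp (-(2⁻¹ * s ^ 2)) := by
      rw [← Real.exp_add, ← Real.exp_add]
      apply Real.exp_le_exp.mpr
      have h7 : (w / ε).im ^ 2 ≤ K ^ 2 := by
        rw [← _root_.sq_abs ((w / ε).im)]; gcongr
      have h8 : s ^ 2 / 2 - (w / ε).re ^ 2 ≤ (s - (w / ε).re) ^ 2 := by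
        nlinarith [sq_nonneg (s - 2 * (w / ε).re)]
      have h9 : (w / ε).re ^ 2 ≤ K ^ 2 := by
        rw [← _root_.sq_abs ((w / ε).re)]; gcongr
      nlinarith
    have hna : ‖u (ε * s) a‖ ≤ ‖a‖ := norm_orbit_le hu a _
    calc Real.exp ((w / ε).im ^ 2) * Real.exp (-((s - (w / ε).re) ^ 2)) *
          ‖2 * ((s : ℂ) - w / ε) / ε‖ * ‖u (ε * s) a‖
        ≤ Real.exp (2 * K ^ 2) * Real.exp (-(2⁻¹ * s ^ 2)) * (2 / ε * (|s| + K)) * ‖a‖ := by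
          apply mul_le_mul ?_ hna (norm_nonneg _) (by positivity)
          apply mul_le_mul h6 h5 (norm_nonneg _) (by positivity)
      _ = 2 / ε * (|s| + K) * Real.exp (2 * K ^ 2) * Real.exp (-(2⁻¹ * s ^ 2)) * ‖a‖ := by ring
  case bint =>
    have h1 : Integrable (fun s : ℝ => |s| * Real.exp (-(2⁻¹ * s ^ 2))) := by
      have h1' := (integrable_rpow_mul_exp_neg_mul_sq (b := 2⁻¹) (by norm_num)
        (s := 1) (by norm_num)).abs
      simpa [abs_mul, Real.abs_exp, neg_mul] using h1'
    have h2 : Integrable (fun s : ℝ => Real.exp (-(2⁻¹ * s ^ 2))) := by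
      simpa using integrable_exp_neg_mul_sq (b := 2⁻¹) (by norm_num)
    have h3 : Integrable (fun s : ℝ => (|s| + K) * Real.exp (-(2⁻¹ * s ^ 2))) := by
      simpa [add_mul, Pi.add_def] using h1.add (h2.const_mul K)
    have h4 := (h3.const_mul (2 / ε)).mul_const (Real.exp (2 * K ^ 2))
    have h5 := h4.mul_const ‖a‖
    apply h5.congr' ?_ (Eventually.of_forall fun s => by ring)
    exact h5.aestronglyMeasurable.congr (Eventually.of_forall fun s => by ring)
  case diff =>
    filter_upwards with s w hw
    exact (gauss_hasDerivAt s ε w).smul_const (u (ε * s) a)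

lemma Freg_real (hu : IsOneParamRep u) (a : H) {ε : ℝ} (hε : 0 < ε) (y : ℝ) :
    Freg u a ε (y : ℂ) = u y (Freg u a ε 0) := by
  have hint0 := integrand_integrable hu a ε (0 : ℂ)
  simp only [Freg]
  rw [(u y).map_smul_of_tower]
  rw [← ContinuousLinearMap.integral_comp_comm (u y) (by simpa using hint0)]
  congr 1
  have hrw : ∀ s : ℝ, u y (Complex.exp (-(((s : ℂ) - 0 / ε) ^ 2)) • u (ε * s) a)
      = Complex.exp (-((s : ℂ)) ^ 2) • u (y + ε * s) a := by
    intro s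
    rw [(u y).map_smul, hu.map_add y (ε * s)]
    simp
  rw [MeasureTheory.integral_congr_ae (Eventually.of_forall hrw)]
  have hsub : ∀ s : ℝ, Complex.exp (-(((s : ℂ) - (y : ℂ) / ε) ^ 2)) • u (ε * s) a
      = (fun s : ℝ => Complex.exp (-((s : ℂ)) ^ 2) • u (y + ε * s) a) (s - y / ε) := by
    intro s
    have h1 : ((s - y / ε : ℝ) : ℂ) = (s : ℂ) - (y : ℂ) / ε := by
      push_cast; ring
    have h2 : y + ε * (s - y / ε) = ε * s := by
      field_simp; ring
    simp only [h1, h2]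
  rw [MeasureTheory.integral_congr_ae (Eventually.of_forall hsub)]
  exact MeasureTheory.integral_sub_right_eq_self
    (fun s : ℝ => Complex.exp (-((s : ℂ)) ^ 2) • u (y + ε * s) a) (y / ε)

lemma Freg_tendsto (hu : IsOneParamRep u) (a : H) :
    Tendsto (fun ε : ℝ => Freg u a ε 0) (𝓝[>] (0 : ℝ)) (𝓝 a) := by
  have hπ : 0 < Real.sqrt Real.pi := Real.sqrt_pos.mpr Real.pi_pos
  have hlim : Tendsto (fun ε : ℝ => ∫ s : ℝ, Complex.exp (-(((s : ℂ) - 0 / ε) ^ 2)) • u (ε * s) a)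
      (𝓝[>] (0 : ℝ)) (𝓝 (∫ s : ℝ, Complex.exp (-((s : ℂ)) ^ 2) • a)) := by
    apply MeasureTheory.tendsto_integral_filter_of_dominated_convergence
      (fun s : ℝ => Real.exp (-(s ^ 2)) * ‖a‖)
    · filter_upwards with ε
      exact ((Complex.continuous_exp.comp (by continuity)).smul
        (cont_orbit hu a ε)).aestronglyMeasurable
    · filter_upwards with ε
      filter_upwards with s
      rw [norm_smul]
      have : ‖Complex.exp (-(((s : ℂ) - 0 / ε) ^ 2))‖ = Real.exp (-(s ^ 2)) := by
        simp [Complex.norm_exp, re_neg_sq, ← Complex.ofReal_pow]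
      rw [this]
      gcongr
      exact norm_orbit_le hu a _
    · exact (integrable_exp_neg_mul_sq one_pos).mul_const ‖a‖ |>.congr'
        (((Real.continuous_exp.comp (by continuity)).mul continuous_const).aestronglyMeasurable)
        (Eventually.of_forall fun s => by ring_nf)
    · filter_upwards with s
      have h1 : Tendsto (fun ε : ℝ => u (ε * s) a) (𝓝[>] (0 : ℝ)) (𝓝 a) := by
        have hc : Continuous fun t : ℝ => u t a := hu.strong_cont a
        have h2 : Tendsto (fun ε : ℝ => ε * s) (𝓝[>] (0 : ℝ)) (𝓝 0) := by
          have h2' : Tendsto (fun ε : ℝ => ε * s) (𝓝 (0 : ℝ)) (𝓝 (0 * s)) :=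
            tendsto_id.mul_const s
          rw [zero_mul] at h2'
          exact h2'.mono_left nhdsWithin_le_nhds
        have := (hc.tendsto 0).comp h2
        simpa [hu.map_zero, Function.comp_def] using this
      have h3 : Tendsto (fun ε : ℝ => Complex.exp (-(((s : ℂ) - 0 / ε) ^ 2)))
          (𝓝[>] (0 : ℝ)) (𝓝 (Complex.exp (-((s : ℂ)) ^ 2))) := by
        have : (fun ε : ℝ => Complex.exp (-(((s : ℂ) - 0 / ε) ^ 2)))
            = fun _ : ℝ => Complex.exp (-((s : ℂ)) ^ 2) := by
          funext ε; norm_num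
        rw [this]; exact tendsto_const_nhds
      exact h3.smul h1
  have hval : ∫ s : ℝ, Complex.exp (-((s : ℂ)) ^ 2) • a = (Real.sqrt Real.pi : ℂ) • a := by
    rw [integral_smul_const]
    congr 1
    have : ∀ s : ℝ, Complex.exp (-((s : ℂ)) ^ 2) = ((Real.exp (-1 * s ^ 2) : ℝ) : ℂ) := by
      intro s; rw [Complex.ofReal_exp]; push_cast; ring_nf
    rw [MeasureTheory.integral_congr_ae (Eventually.of_forall this)]
    rw [show (fun s : ℝ => ((Real.exp (-1 * s ^ 2) : ℝ) : ℂ)) = fun s : ℝ =>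
      ((RCLike.ofReal (Real.exp (-1 * s ^ 2))) : ℂ) from rfl]
    rw [integral_ofReal, integral_gaussian]
    norm_num
  have := hlim.const_smul ((Real.sqrt Real.pi)⁻¹ : ℝ)
  simp only [Freg]
  rw [hval] at this
  convert this using 2
  rw [Complex.coe_smul, smul_smul, inv_mul_cancel₀ (ne_of_gt hπ), one_smul]

lemma hasContVal_Freg (hu : IsOneParamRep u) (a : H) {ε : ℝ} (hε : 0 < ε) (z : ℂ) (t : ℝ) :
    HasContVal u z (u t (Freg u a ε 0)) (Freg u a ε (z + (t : ℂ))) := by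
  refine ⟨fun w => Freg u a ε (w + (t : ℂ)), ?_, ?_, ?_, rfl⟩
  · exact (((Freg_differentiable hu a hε).comp
      ((differentiable_id).add_const ((t : ℂ)))).continuous).continuousOn
  · exact ((Freg_differentiable hu a hε).comp
      ((differentiable_id).add_const ((t : ℂ)))).differentiableOn
  · intro t'
    have h1 : ((t' : ℂ) + (t : ℂ)) = ((t' + t : ℝ) : ℂ) := by push_cast; ring
    show Freg u a ε ((t' : ℂ) + (t : ℂ)) = u t' (u t (Freg u a ε 0))
    rw [h1, Freg_real hu a hε (t' + t), hu.map_add t' t]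
    rfl

end aux

/-- For a strongly continuous one-parameter unitary group `u` on a Hilbert space and a purely
imaginary `z ≠ 0`, the operator `1 + u_z` has dense range. -/
theorem one_add_cont_dense_range
    {H : Type*} [NormedAddCommGroup H] [InnerProductSpace ℂ H] [CompleteSpace H]
    (u : ℝ → H →L[ℂ] H) (hu : IsOneParamRep u)
    (huni : ∀ (t : ℝ) (x y : H), (inner ℂ (u t x) (u t y) : ℂ) = inner ℂ x y)
    (z : ℂ) (hz : z.re = 0) (hz0 : z ≠ 0) :
    Dense {x : H | ∃ a b, HasContVal u z a b ∧ x = a + b} := by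
  have hzim : z.im ≠ 0 := by
    intro h
    exact hz0 (Complex.ext hz h)
  let K : Submodule ℂ H :=
    { carrier := {x : H | ∃ a b, HasContVal u z a b ∧ x = a + b}
      add_mem' := by
        rintro x y ⟨a, b, ⟨f, hf1, hf2, hf3, hf4⟩, rfl⟩ ⟨a', b', ⟨g, hg1, hg2, hg3, hg4⟩, rfl⟩
        refine ⟨a + a', b + b', ⟨fun w => f w + g w, hf1.add hg1, hf2.add hg2, ?_, ?_⟩, ?_⟩
        · intro t; show f ↑t + g ↑t = _; rw [hf3, hg3, map_add]
        · show f z + g z = _; rw [hf4, hg4]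
        · abel
      zero_mem' := by
        refine ⟨0, 0, ⟨fun _ => 0, continuousOn_const, differentiableOn_const 0, ?_, rfl⟩, ?_⟩
        · intro t; rw [map_zero]
        · simp
      smul_mem' := by
        rintro c x ⟨a, b, ⟨f, hf1, hf2, hf3, hf4⟩, rfl⟩
        refine ⟨c • a, c • b, ⟨fun w => c • f w, hf1.const_smul c, hf2.const_smul c, ?_, ?_⟩, ?_⟩
        · intro t; show c • f ↑t = _; rw [hf3, (u t).map_smul]
        · show c • f z = _; rw [hf4]
        · rw [smul_add] }
  show Dense (K : Set H)
  rw [Submodule.dense_iff_topologicalClosure_eq_top, Submodule.topologicalClosure_eq_top_iff,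
    Submodule.eq_bot_iff]
  intro ω hω
  have horth : ∀ a b : H, HasContVal u z a b → (inner ℂ ω (a + b) : ℂ) = 0 := by
    intro a b hab
    exact inner_eq_zero_symm.mp ((Submodule.mem_orthogonal K ω).mp hω _ ⟨a, b, hab, rfl⟩)
  have hmain : ∀ a : H, (inner ℂ ω a : ℂ) = 0 := by
    intro a
    have hev : ∀ ε : ℝ, 0 < ε → (inner ℂ ω (Freg u a ε 0) : ℂ) = 0 := by
      intro ε hε
      set F : ℂ → H := Freg u a ε with hF
      set h : ℂ → ℂ := fun w => inner ℂ ω (F w) with hh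
      have hdh : Differentiable ℂ h :=
        (innerSL ℂ ω).differentiable.comp (Freg_differentiable hu a hε)
      -- functional equation on ℝ
      have hfe_real : ∀ t : ℝ, h (t : ℂ) + h ((t : ℂ) + z) = 0 := by
        intro t
        have h0 := horth _ _ (hasContVal_Freg hu a hε z t)
        rw [inner_add_right] at h0
        show (inner ℂ ω (F (t : ℂ)) : ℂ) + inner ℂ ω (F ((t : ℂ) + z)) = 0
        rw [show F ((t : ℂ) + z) = F (z + (t : ℂ)) by rw [add_comm]]
        rw [hF, Freg_real hu a hε t]
        exact h0
      -- functional equation everywhere by the identity theorem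
      have hg : Differentiable ℂ (fun w => h w + h (w + z)) :=
        hdh.add (hdh.comp (differentiable_id.add_const z))
      have hfe : ∀ w : ℂ, h w + h (w + z) = 0 := by
        have hana : AnalyticOnNhd ℂ (fun w => h w + h (w + z)) univ :=
          hg.differentiableOn.analyticOnNhd isOpen_univ
        have hfreq : ∃ᶠ w in 𝓝[≠] (0 : ℂ), h w + h (w + z) = 0 := by
          have htend : Tendsto (fun n : ℕ => (((1 : ℝ) / (n + 1) : ℝ) : ℂ)) atTop (𝓝[≠] 0) := by
            rw [tendsto_nhdsWithin_iff]
            constructor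
            · have : Tendsto (fun n : ℕ => (1 : ℝ) / (n + 1)) atTop (𝓝 0) :=
                tendsto_one_div_add_atTop_nhds_zero_nat
              have := (Complex.continuous_ofReal.tendsto 0).comp this
              simpa [Function.comp_def] using this
            · filter_upwards with n
              simp only [mem_compl_iff, mem_singleton_iff]
              intro hcontra
              have : (1 : ℝ) / (n + 1) = 0 := by exact_mod_cast hcontra
              have : (0 : ℝ) < 1 / (n + 1) := by positivity
              simp_all
          exact htend.frequently (Frequently.of_forall fun n => hfe_real _)
        have := hana.eqOn_zero_of_preconnected_of_frequently_eq_zero isPreconnected_univ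
          (mem_univ 0) hfreq
        intro w
        exact this (mem_univ w)
      -- periodicity
      have hper : Function.Periodic h (2 * z) := by
        intro w
        have e1 := hfe (w + z)
        have e2 := hfe w
        have e3 : w + 2 * z = w + z + z := by ring
        rw [e3]
        linear_combination e1 - e2
      -- boundedness
      have hbnd : Bornology.IsBounded (range h) := by
        rw [isBounded_iff_forall_norm_le]
        refine ⟨‖ω‖ * (Real.exp ((2 * |z.im| / ε) ^ 2) * ‖a‖), ?_⟩
        rintro x ⟨w, rfl⟩
        set θ : ℝ := w.im / (2 * z.im) with hθ
        set k : ℤ := ⌊θ⌋ with hk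
        set w' : ℂ := w - (k : ℂ) * (2 * z) with hw'
        have hper' : h w = h w' := by
          have := (hper.int_mul k) w'
          rw [hw'] at this
          simpa using this
        have him : |w'.im| ≤ 2 * |z.im| := by
          have h1 : w'.im = w.im - (k : ℝ) * (2 * z.im) := by
            rw [hw']
            simp [Complex.sub_im, Complex.mul_im, Complex.intCast_re, Complex.intCast_im]
          have h2 : w.im = θ * (2 * z.im) := by
            rw [hθ]; field_simp
          have h3 : w'.im = (2 * z.im) * Int.fract θ := by
            rw [h1, h2, Int.fract]; ring
          rw [h3, abs_mul]
          calc |2 * z.im| * |Int.fract θ| ≤ |2 * z.im| * 1 := by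
                gcongr
                rw [_root_.abs_of_nonneg (Int.fract_nonneg θ)]
                exact le_of_lt (Int.fract_lt_one θ)
            _ = 2 * |z.im| := by rw [mul_one, abs_mul]; norm_num
        rw [hper']
        have hF' : ‖F w'‖ ≤ Real.exp ((2 * |z.im| / ε) ^ 2) * ‖a‖ := by
          refine (Freg_norm_le hu a hε w').trans ?_
          have h4 : (w' / (ε : ℂ)).im ^ 2 ≤ (2 * |z.im| / ε) ^ 2 := by
            rw [Complex.div_ofReal_im, ← _root_.sq_abs (w'.im / ε)]
            apply pow_le_pow_left₀ (abs_nonneg _)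
            rw [abs_div, abs_of_pos hε]
            gcongr
          gcongr
        calc ‖h w'‖ = ‖(inner ℂ ω (F w') : ℂ)‖ := rfl
          _ ≤ ‖ω‖ * ‖F w'‖ := norm_inner_le_norm ω (F w')
          _ ≤ ‖ω‖ * (Real.exp ((2 * |z.im| / ε) ^ 2) * ‖a‖) := by gcongr
      -- Liouville
      have hconst : h 0 = h z := hdh.apply_eq_apply_of_bounded hbnd 0 z
      have h00 := hfe 0
      rw [zero_add] at h00
      have hzero : h 0 = 0 := by linear_combination h00 / 2 + hconst / 2
      exact hzero
    -- pass to the limit ε → 0⁺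
    have hten := Freg_tendsto hu a
    have hcont : Tendsto (fun ε : ℝ => (inner ℂ ω (Freg u a ε 0) : ℂ)) (𝓝[>] (0 : ℝ))
        (𝓝 (inner ℂ ω a)) := ((innerSL ℂ ω).continuous.tendsto a).comp hten
    have heq : (fun ε : ℝ => (inner ℂ ω (Freg u a ε 0) : ℂ)) =ᶠ[𝓝[>] (0 : ℝ)] fun _ => 0 :=
      eventually_of_mem self_mem_nhdsWithin fun ε hε => hev ε hε
    have h0' : Tendsto (fun _ : ℝ => (0 : ℂ)) (𝓝[>] (0 : ℝ)) (𝓝 (inner ℂ ω a)) :=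
      Filter.Tendsto.congr' heq hcont
    exact (tendsto_nhds_unique h0' tendsto_const_nhds)
  have := hmain ω
  rwa [inner_self_eq_zero] at this
end
end
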